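/- arXiv:2303.10392 — 8 statements merged into one kernel-verified Lean document; each statement's English description precedes it below -/
import Mathlib

section
/- If A is a bounded linear operator on a complex Hilbert space with A² = 0, then w(A) = (1/2)‖A‖. -/
/-- The numerical radius of a bounded linear operator on a complex Hilbert space:
`w(T) = sup {|⟨Tx, x⟩| : ‖x‖ = 1}`. -/
noncomputable def numRad {H : Type*} [NormedAddCommGroup H] [InnerProductSpace ℂ H]
    (T : H →L[ℂ] H) : ℝ :=
  sSup {r : ℝ | ∃ x : H, ‖x‖ = 1 ∧ r = ‖(inner ℂ (T x) x : ℂ)‖}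

/-- The absolute value `|T| = (T*T)^{1/2}` of a bounded operator. -/
noncomputable def absOp {H : Type*} [NormedAddCommGroup H] [InnerProductSpace ℂ H]
    [CompleteSpace H] (T : H →L[ℂ] H) : H →L[ℂ] H :=
  CFC.sqrt (ContinuousLinearMap.adjoint T * T)

/-- The numerical radius of a complex `n × n` matrix. -/
noncomputable def numRadMat {n : ℕ} (M : Matrix (Fin n) (Fin n) ℂ) : ℝ :=
  numRad (Matrix.toEuclideanCLM (𝕜 := ℂ) M)

open ContinuousLinearMap

section Aux

variable {H : Type*} [NormedAddCommGroup H] [InnerProductSpace ℂ H] [CompleteSpace H]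

local notation "⟪" x ", " y "⟫" => @inner ℂ _ _ x y

/-- Upper bound: if `A² = 0` then `|⟨Ax, x⟩| ≤ ‖A‖/2` for unit `x`. -/
lemma nilsq_upper (A : H →L[ℂ] H) (hA : A * A = 0) {x : H} (hx : ‖x‖ = 1) :
    ‖(inner ℂ (A x) x : ℂ)‖ ≤ ‖A‖ / 2 := by
  set K := A.ker with hK
  haveI : CompleteSpace K := (ContinuousLinearMap.isClosed_ker A).completeSpace_coe
  set y : H := (K.orthogonalProjectionOnto x : H) with hy
  set z : H := x - y with hzdef
  have hyK : y ∈ K := (K.orthogonalProjectionOnto x).2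
  have hzo : z ∈ Kᗮ := Submodule.sub_starProjection_mem_orthogonal (K := K) x
  have hxyz : x = y + z := by simp [hzdef]
  have hAy : A y = 0 := hyK
  have hAAz : A z ∈ K := by
    show A (A z) = 0
    rw [← ContinuousLinearMap.mul_apply, hA, ContinuousLinearMap.zero_apply]
  have hAx : A x = A z := by rw [hxyz]; simp [hAy]
  have hinner : (inner ℂ (A x) x : ℂ) = ⟪A z, y⟫ := by
    rw [hAx, hxyz, inner_add_right,
      Submodule.inner_right_of_mem_orthogonal hAAz hzo, add_zero]
  have hyz : ⟪y, z⟫ = 0 := Submodule.inner_right_of_mem_orthogonal hyK hzo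
  have hpyth : ‖y‖ * ‖y‖ + ‖z‖ * ‖z‖ = 1 := by
    have := norm_add_sq_eq_norm_sq_add_norm_sq_of_inner_eq_zero y z hyz
    rw [← hxyz, hx] at this
    linarith
  have h1 : ‖(inner ℂ (A x) x : ℂ)‖ ≤ ‖A‖ * ‖z‖ * ‖y‖ := by
    rw [hinner]
    calc ‖⟪A z, y⟫‖ ≤ ‖A z‖ * ‖y‖ := norm_inner_le_norm _ _
      _ ≤ ‖A‖ * ‖z‖ * ‖y‖ :=
        mul_le_mul_of_nonneg_right (A.le_opNorm z) (norm_nonneg _)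
  have hnA : (0:ℝ) ≤ ‖A‖ := norm_nonneg _
  nlinarith [norm_nonneg y, norm_nonneg z, sq_nonneg (‖y‖ - ‖z‖)]

end Aux

theorem stmt1 {H : Type*} [NormedAddCommGroup H] [InnerProductSpace ℂ H] [CompleteSpace H]
    (A : H →L[ℂ] H) (hA : A * A = 0) :
    numRad A = (1 / 2) * ‖A‖ := by
  set S := {r : ℝ | ∃ x : H, ‖x‖ = 1 ∧ r = ‖(inner ℂ (A x) x : ℂ)‖} with hS
  have hub : ∀ r ∈ S, r ≤ ‖A‖ / 2 := by
    rintro r ⟨x, hx, rfl⟩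
    exact nilsq_upper A hA hx
  have hBdd : BddAbove S := ⟨‖A‖ / 2, hub⟩
  have hle : sSup S ≤ ‖A‖ / 2 := Real.sSup_le hub (by positivity)
  have hnonneg : (0:ℝ) ≤ sSup S := Real.sSup_nonneg (by rintro r ⟨x, hx, rfl⟩; positivity)
  have hge : ‖A‖ / 2 ≤ sSup S := by
    rcases eq_or_ne A 0 with rfl | hA0
    · simpa using hnonneg
    have hlow : ∀ r : ℝ, 0 ≤ r → r < ‖A‖ → r / 2 ≤ sSup S := by
      intro r hr0 hrA
      obtain ⟨z, hz1, hz2⟩ := A.exists_lt_apply_of_lt_opNorm hrA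
      set K := A.ker with hK
      haveI : CompleteSpace K := (ContinuousLinearMap.isClosed_ker A).completeSpace_coe
      set w : H := z - (K.orthogonalProjectionOnto z : H) with hwdef
      have hwo : w ∈ Kᗮ := Submodule.sub_starProjection_mem_orthogonal (K := K) z
      have hAw : A w = A z := by
        have : A ((K.orthogonalProjectionOnto z : H)) = 0 := (K.orthogonalProjectionOnto z).2
        simp [hwdef, map_sub]; exact this
      have hAzne : A z ≠ 0 := by
        intro h; rw [h, norm_zero] at hz2; linarith
      have hwne : w ≠ 0 := by
        intro h; rw [h, map_zero] at hAw; exact hAzne hAw.symm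
      have hwnorm : ‖w‖ ≤ ‖z‖ := by
        have hyz : (inner ℂ ((K.orthogonalProjectionOnto z : H)) w : ℂ) = 0 :=
          Submodule.inner_right_of_mem_orthogonal (K.orthogonalProjectionOnto z).2 hwo
        have := norm_add_sq_eq_norm_sq_add_norm_sq_of_inner_eq_zero
          ((K.orthogonalProjectionOnto z : H)) w hyz
        have hsum : (K.orthogonalProjectionOnto z : H) + w = z := by simp [hwdef]
        rw [hsum] at this
        nlinarith [norm_nonneg w, norm_nonneg z, norm_nonneg ((K.orthogonalProjectionOnto z : H))]
      have hwpos : (0:ℝ) < ‖w‖ := norm_pos_iff.mpr hwne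
      set u : H := (‖w‖ : ℂ)⁻¹ • w with hu
      have hunorm : ‖u‖ = 1 := by
        rw [hu, norm_smul, norm_inv, Complex.norm_real, Real.norm_of_nonneg (norm_nonneg w)]
        field_simp
      have huo : u ∈ Kᗮ := Submodule.smul_mem _ _ hwo
      have hAu : A u = (‖w‖ : ℂ)⁻¹ • A z := by rw [hu, map_smul, hAw]
      have hAunorm : r < ‖A u‖ := by
        rw [hAu, norm_smul, norm_inv, Complex.norm_real, Real.norm_of_nonneg (norm_nonneg w)]
        have hw1 : ‖w‖ < 1 := lt_of_le_of_lt hwnorm hz1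
        have h1 : ‖A z‖ ≤ ‖w‖⁻¹ * ‖A z‖ := by
          rw [le_inv_mul_iff₀ hwpos]
          nlinarith [norm_nonneg (A z)]
        linarith
      have hAupos : (0:ℝ) < ‖A u‖ := lt_of_le_of_lt hr0 hAunorm
      have hAune : A u ≠ 0 := norm_pos_iff.mp hAupos
      set v : H := (‖A u‖ : ℂ)⁻¹ • (A u) with hv
      have hvnorm : ‖v‖ = 1 := by
        rw [hv, norm_smul, norm_inv, Complex.norm_real, Real.norm_of_nonneg (norm_nonneg _)]
        field_simp
      have hAuK : A u ∈ K := by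
        show A (A u) = 0
        rw [← ContinuousLinearMap.mul_apply, hA, ContinuousLinearMap.zero_apply]
      have hvK : v ∈ K := Submodule.smul_mem _ _ hAuK
      have huv : (inner ℂ v u : ℂ) = 0 := Submodule.inner_right_of_mem_orthogonal hvK huo
      have huv' : (inner ℂ u v : ℂ) = 0 := by
        rw [← inner_conj_symm, huv, map_zero]
      set c : ℂ := ((Real.sqrt 2 : ℝ) : ℂ)⁻¹ with hc
      set x : H := c • (u + v) with hx
      have hsq2 : (0:ℝ) < Real.sqrt 2 := Real.sqrt_pos.mpr (by norm_num)
      have huvnorm : ‖u + v‖ = Real.sqrt 2 := by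
        have h2 : ‖u + v‖ * ‖u + v‖ = 2 := by
          rw [norm_add_sq_eq_norm_sq_add_norm_sq_of_inner_eq_zero u v huv', hunorm, hvnorm]
          norm_num
        nlinarith [norm_nonneg (u + v), Real.sq_sqrt (by norm_num : (2:ℝ) ≥ 0),
          Real.sqrt_nonneg 2]
      have hxnorm : ‖x‖ = 1 := by
        rw [hx, norm_smul, hc, norm_inv, Complex.norm_real,
          Real.norm_of_nonneg (Real.sqrt_nonneg 2), huvnorm]
        field_simp
      have hAv : A v = 0 := by
        rw [hv, map_smul, show A (A u) = 0 from hAuK, smul_zero]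
      have hinner : (inner ℂ (A x) x : ℂ) = (2 : ℂ)⁻¹ * (‖A u‖ : ℂ) := by
        have h1 : (inner ℂ (A u) u : ℂ) = 0 :=
          Submodule.inner_right_of_mem_orthogonal hAuK huo
        have hne : (‖A u‖ : ℂ) ≠ 0 := by
          exact_mod_cast ne_of_gt hAupos
        have h2 : (inner ℂ (A u) v : ℂ) = (‖A u‖ : ℂ) := by
          rw [hv, inner_smul_right, inner_self_eq_norm_sq_to_K]
          field_simp
          rfl
        have hcc : (starRingEnd ℂ) c * c = (2 : ℂ)⁻¹ := by
          rw [hc, map_inv₀, Complex.conj_ofReal, ← mul_inv, ← Complex.ofReal_mul,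
            Real.mul_self_sqrt (by norm_num)]
          norm_num
        rw [hx, map_smul, inner_smul_left, inner_smul_right, map_add, hAv, add_zero,
          inner_add_right, h1, h2, zero_add, ← mul_assoc, hcc]
      have hmem : ‖A u‖ / 2 ∈ S := by
        refine ⟨x, hxnorm, ?_⟩
        rw [hinner, norm_mul, norm_inv, Complex.norm_real,
          Real.norm_of_nonneg (norm_nonneg _)]
        norm_num
        ring
      calc r / 2 ≤ ‖A u‖ / 2 := by linarith
        _ ≤ sSup S := le_csSup hBdd hmem
    by_contra h
    push_neg at h
    have hApos : (0:ℝ) < ‖A‖ := norm_pos_iff.mpr hA0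
    have := hlow ((2 * sSup S + ‖A‖) / 2) (by linarith) (by linarith)
    linarith
  show sSup S = (1 / 2) * ‖A‖
  linarith
end

section
/- Let A = [A_{ij}] be an n×n operator matrix with entries A_{ij} ∈ B(H), and let f, g : [0,∞) → [0,∞) be continuous with f(λ)g(λ) = λ for all λ ≥ 0. Then w(A) ≤ w(Â), where Â is the upper-triangular n×n complex matrix with diagonal entries w(A_{ii}) and, for i < j, entries ‖f²(|A_{ij}|) + g²(|A_{ji}*|)‖^{1/2} · ‖f²(|A_{ji}|) + g²(|A_{ij}*|)‖^{1/2}. -/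
set_option maxHeartbeats 1000000

open scoped NNReal

section Scalar


lemma sqrt_cs {a b c d : ℝ} (ha : 0 ≤ a) (hb : 0 ≤ b) (hc : 0 ≤ c) (hd : 0 ≤ d) :
    Real.sqrt a * Real.sqrt b + Real.sqrt c * Real.sqrt d ≤
      Real.sqrt (a + d) * Real.sqrt (b + c) := by
  have h1 : (Real.sqrt a * Real.sqrt b + Real.sqrt c * Real.sqrt d) ^ 2 ≤ (a + d) * (b + c) := by
    nlinarith [sq_nonneg (Real.sqrt a * Real.sqrt c - Real.sqrt b * Real.sqrt d),
      Real.sq_sqrt ha, Real.sq_sqrt hb, Real.sq_sqrt hc, Real.sq_sqrt hd,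
      Real.sqrt_nonneg a, Real.sqrt_nonneg b, Real.sqrt_nonneg c, Real.sqrt_nonneg d,
      mul_nonneg (Real.sqrt_nonneg a) (Real.sqrt_nonneg b),
      mul_nonneg (Real.sqrt_nonneg c) (Real.sqrt_nonneg d)]
  calc Real.sqrt a * Real.sqrt b + Real.sqrt c * Real.sqrt d
      = Real.sqrt ((Real.sqrt a * Real.sqrt b + Real.sqrt c * Real.sqrt d) ^ 2) := by
        rw [Real.sqrt_sq (by positivity)]
    _ ≤ Real.sqrt ((a + d) * (b + c)) := Real.sqrt_le_sqrt h1
    _ = Real.sqrt (a + d) * Real.sqrt (b + c) := Real.sqrt_mul (by positivity) _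

lemma sum_split {n : ℕ} (h : Fin n → Fin n → ℝ) :
    ∑ i, ∑ j, h i j =
      (∑ i, h i i) + ∑ i, ∑ j, (if i < j then h i j + h j i else 0) := by
  have e : ∀ i j : Fin n, h i j =
      (if i = j then h i j else 0) + (if i < j then h i j else 0) +
        (if j < i then h i j else 0) := by
    intro i j
    rcases lt_trichotomy i j with hlt | heq | hgt
    · simp [hlt, ne_of_lt hlt, not_lt_of_gt hlt, lt_irrefl]
    · simp [heq, lt_irrefl]
    · simp [hgt, (ne_of_lt hgt).symm, not_lt_of_gt hgt, lt_irrefl]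
  have step : ∑ i, ∑ j, h i j =
      (∑ i, ∑ j, if i = j then h i j else 0) +
      (∑ i, ∑ j, if i < j then h i j else 0) +
      (∑ i, ∑ j, if j < i then h i j else 0) := by
    rw [← Finset.sum_add_distrib, ← Finset.sum_add_distrib]
    apply Finset.sum_congr rfl
    intro i _
    rw [← Finset.sum_add_distrib, ← Finset.sum_add_distrib]
    exact Finset.sum_congr rfl fun j _ => e i j
  have diag : (∑ i : Fin n, ∑ j : Fin n, if i = j then h i j else 0) = ∑ i, h i i := by
    apply Finset.sum_congr rfl
    intro i _
    simp
  have third : (∑ i : Fin n, ∑ j : Fin n, if j < i then h i j else 0)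
      = ∑ i : Fin n, ∑ j : Fin n, if i < j then h j i else 0 := Finset.sum_comm
  rw [step, diag, third]
  have comb : (∑ i : Fin n, ∑ j : Fin n, if i < j then h i j else 0) +
      (∑ i : Fin n, ∑ j : Fin n, if i < j then h j i else 0) =
      ∑ i : Fin n, ∑ j : Fin n, (if i < j then h i j + h j i else 0) := by
    rw [← Finset.sum_add_distrib]
    apply Finset.sum_congr rfl
    intro i _
    rw [← Finset.sum_add_distrib]
    apply Finset.sum_congr rfl
    intro j _
    by_cases hij : i < j <;> simp [hij]
  rw [add_assoc, comb]

end Scalar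

section NumRadBasic

variable {H : Type*} [NormedAddCommGroup H] [InnerProductSpace ℂ H]

lemma numRad_nonneg (T : H →L[ℂ] H) : 0 ≤ numRad T :=
  Real.sSup_nonneg (by rintro r ⟨x, hx, rfl⟩; positivity)


lemma numRad_bddAbove (T : H →L[ℂ] H) :
    BddAbove {r : ℝ | ∃ x : H, ‖x‖ = 1 ∧ r = ‖(inner ℂ (T x) x : ℂ)‖} := by
  refine ⟨‖T‖, ?_⟩
  rintro r ⟨x, hx, rfl⟩
  calc ‖(inner ℂ (T x) x : ℂ)‖ ≤ ‖T x‖ * ‖x‖ := norm_inner_le_norm _ _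
    _ ≤ ‖T‖ * ‖x‖ * ‖x‖ := by
        have := T.le_opNorm x
        nlinarith [norm_nonneg x, norm_nonneg (T x)]
    _ = ‖T‖ := by rw [hx]; ring

lemma norm_inner_le_numRad (T : H →L[ℂ] H) (x : H) (hx : ‖x‖ = 1) :
    ‖(inner ℂ (T x) x : ℂ)‖ ≤ numRad T :=
  le_csSup (numRad_bddAbove T) ⟨x, hx, rfl⟩

lemma quadform_le_numRadMat {n : ℕ} (M : Matrix (Fin n) (Fin n) ℂ) (y : Fin n → ℝ)
    (hy : ∑ i, y i ^ 2 = 1) :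
    ∑ i, ∑ j, (M i j).re * y i * y j ≤ numRadMat M := by
  set Y : EuclideanSpace ℂ (Fin n) := (WithLp.equiv 2 _).symm (fun i => (y i : ℂ)) with hYdef
  have hYi : ∀ i, Y i = (y i : ℂ) := fun i => rfl
  have hY : ‖Y‖ = 1 := by
    rw [EuclideanSpace.norm_eq]
    have h1 : ∀ i, ‖Y i‖ ^ 2 = y i ^ 2 := by
      intro i
      rw [hYi i, Complex.norm_real, Real.norm_eq_abs, sq_abs]
    calc Real.sqrt (∑ i, ‖Y i‖ ^ 2) = Real.sqrt (∑ i, y i ^ 2) := by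
          congr 1; exact Finset.sum_congr rfl fun i _ => h1 i
      _ = 1 := by rw [hy, Real.sqrt_one]
  have hle := norm_inner_le_numRad (Matrix.toEuclideanCLM (𝕜 := ℂ) M) Y hY
  have happ : ∀ i, (Matrix.toEuclideanCLM (𝕜 := ℂ) M Y) i = ∑ j, M i j * y j := by
    intro i
    have h2 := Matrix.ofLp_toEuclideanCLM (n := Fin n) (𝕜 := ℂ) M Y
    have h3 : (Matrix.toEuclideanCLM (𝕜 := ℂ) M Y) i
        = Matrix.toLin' M ((WithLp.equiv 2 (Fin n → ℂ)) Y) i := congrFun h2 i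
    rw [h3, Matrix.toLin'_apply]
    simp only [Matrix.mulVec, dotProduct]
    exact Finset.sum_congr rfl fun j _ => rfl
  have hinner : (inner ℂ (Matrix.toEuclideanCLM (𝕜 := ℂ) M Y) Y : ℂ) =
      ∑ i, ∑ j, (starRingEnd ℂ) (M i j) * (y j : ℂ) * (y i : ℂ) := by
    rw [PiLp.inner_apply]
    apply Finset.sum_congr rfl
    intro i _
    rw [RCLike.inner_apply, happ i, hYi i, map_sum, Finset.mul_sum]
    apply Finset.sum_congr rfl
    intro j _
    rw [map_mul, Complex.conj_ofReal]; ring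
  have hre : ((inner ℂ (Matrix.toEuclideanCLM (𝕜 := ℂ) M Y) Y : ℂ)).re =
      ∑ i, ∑ j, (M i j).re * y i * y j := by
    rw [hinner, Complex.re_sum]
    apply Finset.sum_congr rfl
    intro i _
    rw [Complex.re_sum]
    apply Finset.sum_congr rfl
    intro j _
    simp [Complex.mul_re, Complex.conj_re, Complex.conj_im]
    ring
  calc ∑ i, ∑ j, (M i j).re * y i * y j
      = ((inner ℂ (Matrix.toEuclideanCLM (𝕜 := ℂ) M Y) Y : ℂ)).re := hre.symm
    _ ≤ ‖(inner ℂ (Matrix.toEuclideanCLM (𝕜 := ℂ) M Y) Y : ℂ)‖ := Complex.re_le_norm _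
    _ ≤ numRadMat M := hle

lemma norm_inner_le_numRad_mul (T : H →L[ℂ] H) (x : H) :
    ‖(inner ℂ (T x) x : ℂ)‖ ≤ numRad T * ‖x‖ ^ 2 := by
  rcases eq_or_ne x 0 with rfl | hx
  · simp
  · have hn : ‖x‖ ≠ 0 := norm_ne_zero_iff.mpr hx
    have hxu : ‖(‖x‖⁻¹ : ℂ) • x‖ = 1 := by
      rw [norm_smul]
      simp [norm_inv, abs_of_nonneg (norm_nonneg x), hn]
    have h := norm_inner_le_numRad T ((‖x‖⁻¹ : ℂ) • x) hxu
    rw [map_smul, inner_smul_left, inner_smul_right] at h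
    rw [norm_mul, norm_mul] at h
    have hsimp : ‖(starRingEnd ℂ) ((‖x‖ : ℂ)⁻¹)‖ = ‖x‖⁻¹ := by
      simp [norm_inv]
    rw [hsimp, norm_inv] at h
    have hcx : ‖((‖x‖ : ℂ))‖ = ‖x‖ := by simp [abs_of_nonneg (norm_nonneg x)]
    rw [hcx] at h
    have h2 : ‖x‖⁻¹ * (‖x‖⁻¹ * ‖(inner ℂ (T x) x : ℂ)‖) ≤ numRad T := h
    have h3 : ‖(inner ℂ (T x) x : ℂ)‖ =
        ‖x‖ * ‖x‖ * (‖x‖⁻¹ * (‖x‖⁻¹ * ‖(inner ℂ (T x) x : ℂ)‖)) := by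
      field_simp
    rw [h3, pow_two]
    have hnn : 0 ≤ ‖x‖ * ‖x‖ := by positivity
    calc ‖x‖ * ‖x‖ * (‖x‖⁻¹ * (‖x‖⁻¹ * ‖(inner ℂ (T x) x : ℂ)‖))
        ≤ ‖x‖ * ‖x‖ * numRad T := mul_le_mul_of_nonneg_left h2 hnn
      _ = numRad T * (‖x‖ * ‖x‖) := by ring

lemma numRad_le {T : H →L[ℂ] H} {c : ℝ} (hc : 0 ≤ c)
    (h : ∀ x : H, ‖x‖ = 1 → ‖(inner ℂ (T x) x : ℂ)‖ ≤ c) : numRad T ≤ c :=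
  Real.sSup_le (by rintro r ⟨x, hx, rfl⟩; exact h x hx) hc

end NumRadBasic

section Core

variable {H : Type*} [NormedAddCommGroup H] [InnerProductSpace ℂ H] [CompleteSpace H]


-- L2
lemma norm_apply_sq_eq (W : H →L[ℂ] H) (x : H) :
    ‖W x‖ ^ 2 = ((inner ℂ ((star W * W) x) x : ℂ)).re := by
  have h1 : ((star W * W) x) = ContinuousLinearMap.adjoint W (W x) := by
    rw [ContinuousLinearMap.mul_apply, ContinuousLinearMap.star_eq_adjoint]
  rw [h1, ContinuousLinearMap.adjoint_inner_left]
  have := @inner_self_eq_norm_sq ℂ _ _ _ _ (W x)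
  simpa [RCLike.re_to_complex] using this.symm

-- L3
lemma re_inner_nonneg {P : H →L[ℂ] H} (hP : 0 ≤ P) (x : H) :
    0 ≤ ((inner ℂ (P x) x : ℂ)).re := by
  have := ((ContinuousLinearMap.nonneg_iff_isPositive P).mp hP).inner_nonneg_left x
  open scoped ComplexOrder in
  have h' : (0 : ℂ) ≤ inner ℂ (P x) x := by
    simpa [RCLike.re_to_complex, ContinuousLinearMap.reApplyInnerSelf] using this
  open scoped ComplexOrder in
  exact (Complex.nonneg_iff.mp h').1

-- L4
lemma re_inner_mono {P Q : H →L[ℂ] H} (hPQ : P ≤ Q) (x : H) :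
    ((inner ℂ (P x) x : ℂ)).re ≤ ((inner ℂ (Q x) x : ℂ)).re := by
  have h0 : 0 ≤ Q - P := sub_nonneg.mpr hPQ
  have := re_inner_nonneg h0 x
  rw [ContinuousLinearMap.sub_apply, inner_sub_left] at this
  simp only [Complex.sub_re] at this
  linarith

-- L5
lemma re_inner_le_opNorm (P : H →L[ℂ] H) (x : H) :
    ((inner ℂ (P x) x : ℂ)).re ≤ ‖P‖ * ‖x‖ ^ 2 := by
  calc ((inner ℂ (P x) x : ℂ)).re ≤ ‖(inner ℂ (P x) x : ℂ)‖ := Complex.re_le_norm _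
    _ ≤ ‖P x‖ * ‖x‖ := norm_inner_le_norm _ _
    _ ≤ ‖P‖ * ‖x‖ * ‖x‖ := by
        have := P.le_opNorm x
        nlinarith [norm_nonneg x]
    _ = ‖P‖ * ‖x‖ ^ 2 := by ring

-- L1
lemma cfc_absOp_eq (S : H →L[ℂ] H) (f : ℝ≥0 → ℝ≥0) (hf : Continuous f) :
    cfc f (absOp S) = cfc (fun t : ℝ => (f (NNReal.sqrt t.toNNReal) : ℝ)) (star S * S) := by
  have hb0 : (0 : H →L[ℂ] H) ≤ star S * S := star_mul_self_nonneg S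
  have habs : absOp S = cfc (fun t : ℝ => ((NNReal.sqrt t.toNNReal : ℝ≥0) : ℝ)) (star S * S) := by
    rw [absOp, ← ContinuousLinearMap.star_eq_adjoint, CFC.sqrt_eq_cfc,
      cfc_nnreal_eq_real NNReal.sqrt (star S * S) hb0]
  have habs0 : (0 : H →L[ℂ] H) ≤ absOp S := by
    rw [absOp]; exact CFC.sqrt_nonneg (ContinuousLinearMap.adjoint S * S)
  rw [cfc_nnreal_eq_real f (absOp S) habs0, habs]
  rw [← cfc_comp' (fun x : ℝ => (f x.toNNReal : ℝ))
      (fun t : ℝ => ((NNReal.sqrt t.toNNReal : ℝ≥0) : ℝ)) (star S * S)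
      (((NNReal.continuous_coe.comp hf).comp continuous_real_toNNReal).continuousOn)
      (((NNReal.continuous_coe.comp NNReal.continuous_sqrt).comp
        continuous_real_toNNReal).continuousOn)]
  apply cfc_congr
  intro t _
  simp only [Function.comp_apply, Real.toNNReal_coe]

/-- Intertwining: `a • h(a* a) = h(a a*) • a` for continuous `h : ℝ → ℝ`. -/
lemma intertwine (a : H →L[ℂ] H) (h : ℝ → ℝ) (hh : Continuous h) :
    a * cfc h (star a * a) = cfc h (a * star a) * a := by
  set b := star a * a with hb_def
  set c := a * star a with hc_def
  have hb : IsSelfAdjoint b := IsSelfAdjoint.star_mul_self a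
  have hc : IsSelfAdjoint c := by
    simpa [hc_def] using IsSelfAdjoint.star_mul_self (star a)
  set s : Set ℝ := spectrum ℝ b ∪ spectrum ℝ c with hs_def
  have hsb : spectrum ℝ b ⊆ s := Set.subset_union_left
  have hsc : spectrum ℝ c ⊆ s := Set.subset_union_right
  haveI : CompactSpace s :=
    isCompact_iff_compactSpace.mp ((spectrum.isCompact b).union (spectrum.isCompact c))
  let ιb : C(spectrum ℝ b, s) := ⟨Set.inclusion hsb, continuous_inclusion hsb⟩
  let ιc : C(spectrum ℝ c, s) := ⟨Set.inclusion hsc, continuous_inclusion hsc⟩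
  let Φ₁ : C(s, ℝ) → (H →L[ℂ] H) := fun k => a * cfcHom hb (k.comp ιb)
  let Φ₂ : C(s, ℝ) → (H →L[ℂ] H) := fun k => cfcHom hc (k.comp ιc) * a
  have key : ∀ k : C(s, ℝ), Φ₁ k = Φ₂ k := by
    have hΦ₁ : Continuous Φ₁ :=
      (continuous_mul_left a).comp <|
        (cfcHom_continuous hb).comp (ContinuousMap.continuous_precomp ιb)
    have hΦ₂ : Continuous Φ₂ :=
      (continuous_mul_right a).comp <|
        (cfcHom_continuous hc).comp (ContinuousMap.continuous_precomp ιc)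
    intro k
    induction k using ContinuousMap.induction_on_of_compact with
    | const r =>
        have h1 : (ContinuousMap.const s r).comp ιb = algebraMap ℝ C(spectrum ℝ b, ℝ) r := rfl
        have h2 : (ContinuousMap.const s r).comp ιc = algebraMap ℝ C(spectrum ℝ c, ℝ) r := rfl
        simp only [Φ₁, Φ₂, h1, h2, AlgHomClass.commutes]
        exact (Algebra.commutes r a).symm ▸ (Algebra.commutes r a)
    | id =>
        have h1 : (ContinuousMap.restrict s (ContinuousMap.id ℝ)).comp ιb
            = (ContinuousMap.id ℝ).restrict (spectrum ℝ b) := rfl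
        have h2 : (ContinuousMap.restrict s (ContinuousMap.id ℝ)).comp ιc
            = (ContinuousMap.id ℝ).restrict (spectrum ℝ c) := rfl
        simp only [Φ₁, Φ₂, h1, h2, cfcHom_id]
        rw [hb_def, hc_def, mul_assoc]
    | star_id =>
        have h1 : star (ContinuousMap.restrict s (ContinuousMap.id ℝ))
            = ContinuousMap.restrict s (ContinuousMap.id ℝ) := by
          ext t; simp
        rw [h1]
        have h2 : (ContinuousMap.restrict s (ContinuousMap.id ℝ)).comp ιb
            = (ContinuousMap.id ℝ).restrict (spectrum ℝ b) := rfl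
        have h3 : (ContinuousMap.restrict s (ContinuousMap.id ℝ)).comp ιc
            = (ContinuousMap.id ℝ).restrict (spectrum ℝ c) := rfl
        simp only [Φ₁, Φ₂, h2, h3, cfcHom_id]
        rw [hb_def, hc_def, mul_assoc]
    | add p q hp hq =>
        have e1 : (p + q).comp ιb = p.comp ιb + q.comp ιb := rfl
        have e2 : (p + q).comp ιc = p.comp ιc + q.comp ιc := rfl
        simp only [Φ₁, Φ₂, e1, e2, map_add] at *
        rw [mul_add, add_mul, hp, hq]
    | mul p q hp hq =>
        have e1 : (p * q).comp ιb = p.comp ιb * q.comp ιb := rfl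
        have e2 : (p * q).comp ιc = p.comp ιc * q.comp ιc := rfl
        simp only [Φ₁, Φ₂, e1, e2, map_mul] at *
        calc a * (cfcHom hb (p.comp ιb) * cfcHom hb (q.comp ιb))
            = (a * cfcHom hb (p.comp ιb)) * cfcHom hb (q.comp ιb) := by rw [mul_assoc]
          _ = (cfcHom hc (p.comp ιc) * a) * cfcHom hb (q.comp ιb) := by rw [hp]
          _ = cfcHom hc (p.comp ιc) * (a * cfcHom hb (q.comp ιb)) := by rw [mul_assoc]
          _ = cfcHom hc (p.comp ιc) * (cfcHom hc (q.comp ιc) * a) := by rw [hq]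
          _ = cfcHom hc (p.comp ιc) * cfcHom hc (q.comp ιc) * a := by rw [mul_assoc]
    | frequently k hk =>
        have : k ∈ closure {k : C(s, ℝ) | Φ₁ k = Φ₂ k} :=
          mem_closure_iff_frequently.mpr hk
        have hcl : IsClosed {k : C(s, ℝ) | Φ₁ k = Φ₂ k} := isClosed_eq hΦ₁ hΦ₂
        exact hcl.closure_subset this
  -- now apply to h
  have hmem_b : ContinuousOn h (spectrum ℝ b) := hh.continuousOn
  have hmem_c : ContinuousOn h (spectrum ℝ c) := hh.continuousOn
  let k : C(s, ℝ) := ⟨fun t => h t, hh.comp continuous_subtype_val⟩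
  have e1 : cfc h b = cfcHom hb (k.comp ιb) := by
    rw [cfc_apply h b hb hmem_b]
    congr 1
  have e2 : cfc h c = cfcHom hc (k.comp ιc) := by
    rw [cfc_apply h c hc hmem_c]
    congr 1
  rw [e1, e2]
  exact key k

-- mixed Schwarz
lemma mixed_schwarz (S : H →L[ℂ] H) (f g : ℝ≥0 → ℝ≥0) (hf : Continuous f) (hg : Continuous g)
    (hfg : ∀ l : ℝ≥0, f l * g l = l) (x y : H) :
    ‖(inner ℂ (S x) y : ℂ)‖ ≤
      Real.sqrt ((inner ℂ ((cfc f (absOp S) ^ 2) x) x : ℂ)).re *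
      Real.sqrt ((inner ℂ ((cfc g (absOp (star S)) ^ 2) y) y : ℂ)).re := by
  have hb0 : (0 : H →L[ℂ] H) ≤ star S * S := star_mul_self_nonneg S
  have hc0 : (0 : H →L[ℂ] H) ≤ S * star S := mul_star_self_nonneg S
  have hbsa : IsSelfAdjoint (star S * S) := .of_nonneg hb0
  have hcsa : IsSelfAdjoint (S * star S) := .of_nonneg hc0
  set F : ℝ → ℝ := fun t => (f (NNReal.sqrt t.toNNReal) : ℝ) with hFdef
  set G : ℝ → ℝ := fun t => (g (NNReal.sqrt t.toNNReal) : ℝ) with hGdef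
  have hFc : Continuous F :=
    (NNReal.continuous_coe.comp hf).comp (NNReal.continuous_sqrt.comp continuous_real_toNNReal)
  have hGc : Continuous G :=
    (NNReal.continuous_coe.comp hg).comp (NNReal.continuous_sqrt.comp continuous_real_toNNReal)
  have hF0 : ∀ t, 0 ≤ F t := fun t => (f _).2
  have hG0 : ∀ t, 0 ≤ G t := fun t => (g _).2
  have hFG : ∀ t : ℝ, 0 ≤ t → F t * G t = Real.sqrt t := by
    intro t ht
    have h1 : F t * G t = ((f (NNReal.sqrt t.toNNReal) * g (NNReal.sqrt t.toNNReal) : ℝ≥0) : ℝ) := by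
      push_cast; ring
    rw [h1, hfg, Real.coe_sqrt, Real.coe_toNNReal t ht]
  have eqF : cfc f (absOp S) ^ 2 = cfc (fun t => F t ^ 2) (star S * S) := by
    rw [cfc_absOp_eq S f hf, ← cfc_pow _ 2 _ hFc.continuousOn hbsa]
  have eqG : cfc g (absOp (star S)) ^ 2 = cfc (fun t => G t ^ 2) (S * star S) := by
    have h1 := cfc_absOp_eq (star S) g hg
    rw [star_star] at h1
    rw [h1, ← cfc_pow _ 2 _ hGc.continuousOn hcsa]
  rw [eqF, eqG]
  set α := ((inner ℂ ((cfc (fun t => F t ^ 2) (star S * S)) x) x : ℂ)).re with hαdef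
  set β := ((inner ℂ ((cfc (fun t => G t ^ 2) (S * star S)) y) y : ℂ)).re with hβdef
  have hPF : (0 : H →L[ℂ] H) ≤ cfc (fun t => F t ^ 2) (star S * S) :=
    cfc_nonneg (fun t _ => sq_nonneg _)
  have hPG : (0 : H →L[ℂ] H) ≤ cfc (fun t => G t ^ 2) (S * star S) :=
    cfc_nonneg (fun t _ => sq_nonneg _)
  have hα : 0 ≤ α := re_inner_nonneg hPF x
  have hβ : 0 ≤ β := re_inner_nonneg hPG y
  suffices hsq : ‖(inner ℂ (S x) y : ℂ)‖ ^ 2 ≤ α * β by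
    have h1 : ‖(inner ℂ (S x) y : ℂ)‖ = Real.sqrt (‖(inner ℂ (S x) y : ℂ)‖ ^ 2) :=
      (Real.sqrt_sq (norm_nonneg _)).symm
    rw [h1, ← Real.sqrt_mul hα]
    exact Real.sqrt_le_sqrt hsq
  set K := ‖cfc G (S * star S)‖ with hKdef
  have hK : 0 ≤ K := norm_nonneg _
  have key : ∀ ε : ℝ, 0 < ε →
      ‖(inner ℂ (S x) y : ℂ)‖ ^ 2 ≤ α * (β + (2 * ε * K + ε ^ 2) * ‖y‖ ^ 2) := by
    intro ε hε
    set Gε : ℝ → ℝ := fun t => G t + ε with hGεdef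
    have hGεc : Continuous Gε := hGc.add continuous_const
    have hGεpos : ∀ t, 0 < Gε t := fun t => add_pos_of_nonneg_of_pos (hG0 t) hε
    have hQc : Continuous fun t : ℝ => (Gε t)⁻¹ := hGεc.inv₀ (fun t => (hGεpos t).ne')
    set Q := cfc (fun t => (Gε t)⁻¹) (S * star S) with hQdef
    set R := cfc Gε (S * star S) with hRdef
    have hQR : Q * R = 1 := by
      rw [hQdef, hRdef, ← cfc_mul _ _ (S * star S) hQc.continuousOn hGεc.continuousOn]
      have h2 : cfc (fun t => (Gε t)⁻¹ * Gε t) (S * star S) =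
          cfc (fun _ : ℝ => (1 : ℝ)) (S * star S) :=
        cfc_congr fun t _ => inv_mul_cancel₀ (hGεpos t).ne'
      rw [h2, cfc_const 1 (S * star S) hcsa, map_one]
    have hQsa : IsSelfAdjoint Q := cfc_predicate _ _
    have hRsa : IsSelfAdjoint R := cfc_predicate _ _
    have hyQR : Q (R y) = y := by
      rw [← ContinuousLinearMap.mul_apply, hQR, ContinuousLinearMap.one_apply]
    have hQadj : ContinuousLinearMap.adjoint Q = Q := by
      rw [← ContinuousLinearMap.star_eq_adjoint]; exact hQsa.star_eq
    have step1 : (inner ℂ (S x) y : ℂ) = inner ℂ ((Q * S) x) (R y) := by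
      conv_rhs => rw [ContinuousLinearMap.mul_apply, ← hQadj]
      rw [ContinuousLinearMap.adjoint_inner_left, hyQR]
    have step2 : ‖(inner ℂ (S x) y : ℂ)‖ ≤ ‖(Q * S) x‖ * ‖R y‖ := by
      rw [step1]; exact norm_inner_le_norm _ _
    -- factor 1
    have hQQ : Q * Q = cfc (fun t => ((Gε t)⁻¹) ^ 2) (S * star S) := by
      rw [cfc_pow _ 2 _ hQc.continuousOn hcsa, sq, hQdef]
    have hcomm : star S * cfc (fun t => ((Gε t)⁻¹) ^ 2) (S * star S) =
        cfc (fun t => ((Gε t)⁻¹) ^ 2) (star S * S) * star S := by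
      have h4 := intertwine (star S) (fun t => ((Gε t)⁻¹) ^ 2) (hQc.pow 2)
      simpa [star_star] using h4
    have hopQ : star (Q * S) * (Q * S) =
        cfc (fun t => ((Gε t)⁻¹) ^ 2 * t) (star S * S) := by
      have h5 : star (Q * S) * (Q * S) = star S * (Q * Q) * S := by
        rw [star_mul, hQsa.star_eq]; noncomm_ring
      have h6 : cfc (fun t => ((Gε t)⁻¹) ^ 2 * t) (star S * S) =
          cfc (fun t => ((Gε t)⁻¹) ^ 2) (star S * S) * cfc (fun t : ℝ => t) (star S * S) :=
        cfc_mul _ _ _ (hQc.pow 2).continuousOn continuous_id'.continuousOn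
      rw [cfc_id' ℝ (star S * S) hbsa] at h6
      rw [h5, hQQ, hcomm, mul_assoc, ← h6]
    have factor1 : ‖(Q * S) x‖ ^ 2 =
        ((inner ℂ ((cfc (fun t => ((Gε t)⁻¹) ^ 2 * t) (star S * S)) x) x : ℂ)).re := by
      rw [norm_apply_sq_eq, hopQ]
    have hkF : cfc (fun t => ((Gε t)⁻¹) ^ 2 * t) (star S * S) ≤
        cfc (fun t => F t ^ 2) (star S * S) := by
      apply cfc_mono _ ((hQc.pow 2).mul continuous_id).continuousOn (hFc.pow 2).continuousOn
      intro t ht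
      have ht0 : 0 ≤ t := spectrum_nonneg_of_nonneg hb0 ht
      have hteq : t = (F t * G t) ^ 2 := by rw [hFG t ht0, Real.sq_sqrt ht0]
      have hu : 0 < Gε t := hGεpos t
      have hGe : Gε t = G t + ε := rfl
      have h9 : 0 ≤ F t ^ 2 * (2 * G t * ε + ε ^ 2) := by
        have := hG0 t
        positivity
      show ((Gε t)⁻¹) ^ 2 * id t ≤ F t ^ 2
      rw [inv_pow, ← div_eq_inv_mul, div_le_iff₀ (by positivity)]
      simp only [id_eq]
      rw [hGe]
      nlinarith [hteq, h9]
    have hα1 : ((inner ℂ ((cfc (fun t => ((Gε t)⁻¹) ^ 2 * t) (star S * S)) x) x : ℂ)).re ≤ α :=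
      re_inner_mono hkF x
    have hk0 : 0 ≤ ((inner ℂ ((cfc (fun t => ((Gε t)⁻¹) ^ 2 * t) (star S * S)) x) x : ℂ)).re :=
      re_inner_nonneg (cfc_nonneg fun t ht =>
        mul_nonneg (by positivity) (spectrum_nonneg_of_nonneg hb0 ht)) x
    -- factor 2
    have hRR : star R * R = cfc (fun t => Gε t ^ 2) (S * star S) := by
      rw [hRsa.star_eq, cfc_pow _ 2 _ hGεc.continuousOn hcsa, sq, hRdef]
    have factor2 : ‖R y‖ ^ 2 =
        ((inner ℂ ((cfc (fun t => Gε t ^ 2) (S * star S)) y) y : ℂ)).re := by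
      rw [norm_apply_sq_eq, hRR]
    have hsplit : cfc (fun t => Gε t ^ 2) (S * star S) =
        cfc (fun t => G t ^ 2) (S * star S) + cfc (fun t => 2 * ε * G t + ε ^ 2) (S * star S) := by
      rw [← cfc_add (a := S * star S) (fun t => G t ^ 2) (fun t => 2 * ε * G t + ε ^ 2) (hGc.pow 2).continuousOn
        (by fun_prop : Continuous fun t => 2 * ε * G t + ε ^ 2).continuousOn]
      apply cfc_congr; intro t _; simp only [hGεdef]; ring
    have hE0 : (0 : H →L[ℂ] H) ≤ cfc (fun t => 2 * ε * G t + ε ^ 2) (S * star S) :=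
      cfc_nonneg fun t _ => by
        have := hG0 t; positivity
    have hEnorm : ‖cfc (fun t => 2 * ε * G t + ε ^ 2) (S * star S)‖ ≤ 2 * ε * K + ε ^ 2 := by
      apply norm_cfc_le (by positivity)
      intro t ht
      have hGt : G t ≤ K := by
        have h6 := norm_apply_le_norm_cfc G (S * star S) ht hGc.continuousOn hcsa
        calc G t ≤ |G t| := le_abs_self _
          _ ≤ K := by rw [← Real.norm_eq_abs]; exact h6
      have h7 : (0:ℝ) ≤ 2 * ε * G t + ε ^ 2 := by
        have := hG0 t; positivity
      rw [Real.norm_eq_abs, abs_of_nonneg h7]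
      nlinarith [hε.le]
    have hβ2 : ((inner ℂ ((cfc (fun t => Gε t ^ 2) (S * star S)) y) y : ℂ)).re ≤
        β + (2 * ε * K + ε ^ 2) * ‖y‖ ^ 2 := by
      rw [hsplit]
      have h8 : ((inner ℂ ((cfc (fun t => G t ^ 2) (S * star S) +
          cfc (fun t => 2 * ε * G t + ε ^ 2) (S * star S)) y) y : ℂ)).re =
          β + ((inner ℂ ((cfc (fun t => 2 * ε * G t + ε ^ 2) (S * star S)) y) y : ℂ)).re := by
        rw [ContinuousLinearMap.add_apply, inner_add_left, Complex.add_re]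
      rw [h8]
      have h9 := (re_inner_le_opNorm (cfc (fun t => 2 * ε * G t + ε ^ 2) (S * star S)) y).trans
        (mul_le_mul_of_nonneg_right hEnorm (by positivity))
      linarith
    have hfac2_0 : 0 ≤ ((inner ℂ ((cfc (fun t => Gε t ^ 2) (S * star S)) y) y : ℂ)).re :=
      re_inner_nonneg (cfc_nonneg fun t _ => sq_nonneg _) y
    have h10 : ‖(inner ℂ (S x) y : ℂ)‖ ^ 2 ≤ (‖(Q * S) x‖ * ‖R y‖) ^ 2 := by
      apply pow_le_pow_left₀ (norm_nonneg _) step2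
    have h11 : (‖(Q * S) x‖ * ‖R y‖) ^ 2 = ‖(Q * S) x‖ ^ 2 * ‖R y‖ ^ 2 := by ring
    rw [h11, factor1, factor2] at h10
    nlinarith [h10, hα1, hβ2, hα, hk0, hfac2_0]
  have cont : Filter.Tendsto (fun ε : ℝ => α * (β + (2 * ε * K + ε ^ 2) * ‖y‖ ^ 2))
      (nhdsWithin 0 (Set.Ioi 0)) (nhds (α * β)) := by
    have hcont : Continuous (fun ε : ℝ => α * (β + (2 * ε * K + ε ^ 2) * ‖y‖ ^ 2)) := by
      fun_prop
    have h12 : Filter.Tendsto (fun ε : ℝ => α * (β + (2 * ε * K + ε ^ 2) * ‖y‖ ^ 2))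
        (nhds 0) (nhds (α * (β + (2 * (0:ℝ) * K + (0:ℝ) ^ 2) * ‖y‖ ^ 2))) := hcont.tendsto 0
    rw [show α * (β + (2 * (0:ℝ) * K + (0:ℝ) ^ 2) * ‖y‖ ^ 2) = α * β by ring] at h12
    exact h12.mono_left nhdsWithin_le_nhds
  exact ge_of_tendsto cont
    (Filter.eventually_of_mem self_mem_nhdsWithin (fun ε hε => key ε hε))


lemma pair_bound (S₁ S₂ : H →L[ℂ] H) (f g : ℝ≥0 → ℝ≥0) (hf : Continuous f) (hg : Continuous g)
    (hfg : ∀ l : ℝ≥0, f l * g l = l) (u v : H) :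
    ‖(inner ℂ (S₁ u) v : ℂ)‖ + ‖(inner ℂ (S₂ v) u : ℂ)‖ ≤
      Real.sqrt ‖cfc f (absOp S₁) ^ 2 + cfc g (absOp (star S₂)) ^ 2‖ *
      Real.sqrt ‖cfc f (absOp S₂) ^ 2 + cfc g (absOp (star S₁)) ^ 2‖ * (‖v‖ * ‖u‖) := by
  have sq_nn : ∀ W : H →L[ℂ] H, (0 : H →L[ℂ] H) ≤ W → (0 : H →L[ℂ] H) ≤ W ^ 2 := by
    intro W hW
    rw [sq]
    calc (0 : H →L[ℂ] H) ≤ star W * W := star_mul_self_nonneg W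
      _ = W * W := by rw [(IsSelfAdjoint.of_nonneg hW).star_eq]
  have hP1 : (0 : H →L[ℂ] H) ≤ cfc f (absOp S₁) ^ 2 := sq_nn _ (cfc_predicate f (absOp S₁))
  have hP2 : (0 : H →L[ℂ] H) ≤ cfc f (absOp S₂) ^ 2 := sq_nn _ (cfc_predicate f (absOp S₂))
  have hQ1 : (0 : H →L[ℂ] H) ≤ cfc g (absOp (star S₁)) ^ 2 :=
    sq_nn _ (cfc_predicate g (absOp (star S₁)))
  have hQ2 : (0 : H →L[ℂ] H) ≤ cfc g (absOp (star S₂)) ^ 2 :=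
    sq_nn _ (cfc_predicate g (absOp (star S₂)))
  set a := ((inner ℂ ((cfc f (absOp S₁) ^ 2) u) u : ℂ)).re with hadef
  set b := ((inner ℂ ((cfc g (absOp (star S₁)) ^ 2) v) v : ℂ)).re with hbdef
  set c := ((inner ℂ ((cfc f (absOp S₂) ^ 2) v) v : ℂ)).re with hcdef
  set d := ((inner ℂ ((cfc g (absOp (star S₂)) ^ 2) u) u : ℂ)).re with hddef
  have ha : 0 ≤ a := re_inner_nonneg hP1 u
  have hb : 0 ≤ b := re_inner_nonneg hQ1 v
  have hc : 0 ≤ c := re_inner_nonneg hP2 v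
  have hd : 0 ≤ d := re_inner_nonneg hQ2 u
  have MS1 := mixed_schwarz S₁ f g hf hg hfg u v
  have MS2 := mixed_schwarz S₂ f g hf hg hfg v u
  have step : ‖(inner ℂ (S₁ u) v : ℂ)‖ + ‖(inner ℂ (S₂ v) u : ℂ)‖ ≤
      Real.sqrt (a + d) * Real.sqrt (b + c) :=
    (add_le_add MS1 MS2).trans (sqrt_cs ha hb hc hd)
  have had : a + d =
      ((inner ℂ ((cfc f (absOp S₁) ^ 2 + cfc g (absOp (star S₂)) ^ 2) u) u : ℂ)).re := by
    rw [ContinuousLinearMap.add_apply, inner_add_left, Complex.add_re]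
  have hcb : c + b =
      ((inner ℂ ((cfc f (absOp S₂) ^ 2 + cfc g (absOp (star S₁)) ^ 2) v) v : ℂ)).re := by
    rw [ContinuousLinearMap.add_apply, inner_add_left, Complex.add_re]
  have bound1 : a + d ≤ ‖cfc f (absOp S₁) ^ 2 + cfc g (absOp (star S₂)) ^ 2‖ * ‖u‖ ^ 2 := by
    rw [had]; exact re_inner_le_opNorm _ u
  have bound2 : c + b ≤ ‖cfc f (absOp S₂) ^ 2 + cfc g (absOp (star S₁)) ^ 2‖ * ‖v‖ ^ 2 := by
    rw [hcb]; exact re_inner_le_opNorm _ v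
  have sq1 : Real.sqrt (a + d) ≤
      Real.sqrt ‖cfc f (absOp S₁) ^ 2 + cfc g (absOp (star S₂)) ^ 2‖ * ‖u‖ := by
    calc Real.sqrt (a + d)
        ≤ Real.sqrt (‖cfc f (absOp S₁) ^ 2 + cfc g (absOp (star S₂)) ^ 2‖ * ‖u‖ ^ 2) :=
          Real.sqrt_le_sqrt bound1
      _ = Real.sqrt ‖cfc f (absOp S₁) ^ 2 + cfc g (absOp (star S₂)) ^ 2‖ * ‖u‖ := by
          rw [Real.sqrt_mul (norm_nonneg _), Real.sqrt_sq (norm_nonneg _)]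
  have sq2 : Real.sqrt (b + c) ≤
      Real.sqrt ‖cfc f (absOp S₂) ^ 2 + cfc g (absOp (star S₁)) ^ 2‖ * ‖v‖ := by
    rw [add_comm]
    calc Real.sqrt (c + b)
        ≤ Real.sqrt (‖cfc f (absOp S₂) ^ 2 + cfc g (absOp (star S₁)) ^ 2‖ * ‖v‖ ^ 2) :=
          Real.sqrt_le_sqrt bound2
      _ = Real.sqrt ‖cfc f (absOp S₂) ^ 2 + cfc g (absOp (star S₁)) ^ 2‖ * ‖v‖ := by
          rw [Real.sqrt_mul (norm_nonneg _), Real.sqrt_sq (norm_nonneg _)]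
  refine step.trans ?_
  calc Real.sqrt (a + d) * Real.sqrt (b + c)
      ≤ (Real.sqrt ‖cfc f (absOp S₁) ^ 2 + cfc g (absOp (star S₂)) ^ 2‖ * ‖u‖) *
        (Real.sqrt ‖cfc f (absOp S₂) ^ 2 + cfc g (absOp (star S₁)) ^ 2‖ * ‖v‖) :=
        mul_le_mul sq1 sq2 (Real.sqrt_nonneg _) (by positivity)
    _ = Real.sqrt ‖cfc f (absOp S₁) ^ 2 + cfc g (absOp (star S₂)) ^ 2‖ *
        Real.sqrt ‖cfc f (absOp S₂) ^ 2 + cfc g (absOp (star S₁)) ^ 2‖ * (‖v‖ * ‖u‖) := by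
        ring

end Core

open ContinuousLinearMap
theorem stmt6 {H : Type*} [NormedAddCommGroup H] [InnerProductSpace ℂ H] [CompleteSpace H]
    {n : ℕ} (A : Fin n → Fin n → (H →L[ℂ] H))
    (f g : NNReal → NNReal) (hf : Continuous f) (hg : Continuous g)
    (hfg : ∀ lam : NNReal, f lam * g lam = lam)
    (T : PiLp 2 (fun _ : Fin n => H) →L[ℂ] PiLp 2 (fun _ : Fin n => H))
    (hT : ∀ x : PiLp 2 (fun _ : Fin n => H), ∀ i, T x i = ∑ j, A i j (x j))
    (Ahat : Matrix (Fin n) (Fin n) ℂ)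
    (hAhat : ∀ i j, Ahat i j =
      if i = j then (numRad (A i i) : ℂ)
      else if i < j then
        ((Real.sqrt ‖cfc f (absOp (A i j)) ^ 2 + cfc g (absOp (adjoint (A j i))) ^ 2‖ *
          Real.sqrt ‖cfc f (absOp (A j i)) ^ 2 + cfc g (absOp (adjoint (A i j))) ^ 2‖ : ℝ) : ℂ)
      else 0) :
    numRad T ≤ numRadMat Ahat := by
  classical
  apply numRad_le (numRad_nonneg _)
  intro x hx
  set y : Fin n → ℝ := fun i => ‖x i‖ with hydef
  have hy2 : ∑ i, y i ^ 2 = 1 := by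
    have h1 := PiLp.norm_sq_eq_of_L2 (fun _ : Fin n => H) x
    rw [hx] at h1
    simpa using h1.symm
  have hTx : (inner ℂ (T x) x : ℂ) = ∑ i, ∑ j, (inner ℂ (A i j (x j)) (x i) : ℂ) := by
    rw [PiLp.inner_apply]
    apply Finset.sum_congr rfl
    intro i _
    rw [hT x i, sum_inner]
  set t : Fin n → Fin n → ℝ := fun i j => ‖(inner ℂ (A i j (x j)) (x i) : ℂ)‖ with htdef
  have hb1 : ‖(inner ℂ (T x) x : ℂ)‖ ≤ ∑ i, ∑ j, t i j := by
    rw [hTx]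
    refine (norm_sum_le _ _).trans ?_
    exact Finset.sum_le_sum fun i _ => norm_sum_le _ _
  have main : ∑ i, ∑ j, t i j ≤ ∑ i, ∑ j, (Ahat i j).re * y i * y j := by
    rw [sum_split t, sum_split (fun i j => (Ahat i j).re * y i * y j)]
    apply add_le_add
    · apply Finset.sum_le_sum
      intro i _
      have h2 := norm_inner_le_numRad_mul (A i i) (x i)
      have h3 : (Ahat i i).re = numRad (A i i) := by
        rw [hAhat i i, if_pos rfl, Complex.ofReal_re]
      rw [h3]
      calc t i i ≤ numRad (A i i) * ‖x i‖ ^ 2 := h2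
        _ = numRad (A i i) * y i * y i := by rw [hydef]; ring
    · apply Finset.sum_le_sum
      intro i _
      apply Finset.sum_le_sum
      intro j _
      by_cases hij : i < j
      · rw [if_pos hij, if_pos hij]
        show t i j + t j i ≤ (Ahat i j).re * y i * y j + (Ahat j i).re * y j * y i
        have hji0 : Ahat j i = 0 := by
          rw [hAhat j i, if_neg (ne_of_gt hij), if_neg (by exact fun h => absurd hij (asymm h))]
        have hre : (Ahat i j).re =
            Real.sqrt ‖cfc f (absOp (A i j)) ^ 2 + cfc g (absOp (adjoint (A j i))) ^ 2‖ *
            Real.sqrt ‖cfc f (absOp (A j i)) ^ 2 + cfc g (absOp (adjoint (A i j))) ^ 2‖ := by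
          rw [hAhat i j, if_neg (ne_of_lt hij), if_pos hij, Complex.ofReal_re]
        have hpb := pair_bound (A i j) (A j i) f g hf hg hfg (x j) (x i)
        rw [← ContinuousLinearMap.star_eq_adjoint, ← ContinuousLinearMap.star_eq_adjoint] at hre
        calc t i j + t j i
            ≤ Real.sqrt ‖cfc f (absOp (A i j)) ^ 2 + cfc g (absOp (star (A j i))) ^ 2‖ *
              Real.sqrt ‖cfc f (absOp (A j i)) ^ 2 + cfc g (absOp (star (A i j))) ^ 2‖ *
              (‖x i‖ * ‖x j‖) := hpb
          _ = (Ahat i j).re * y i * y j + (Ahat j i).re * y j * y i := by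
              rw [hre, hji0]
              simp only [Complex.zero_re, hydef]
              ring
      · rw [if_neg hij, if_neg hij]
  have hq := quadform_le_numRadMat Ahat y hy2
  calc ‖(inner ℂ (T x) x : ℂ)‖ ≤ ∑ i, ∑ j, t i j := hb1
    _ ≤ ∑ i, ∑ j, (Ahat i j).re * y i * y j := main
    _ ≤ numRadMat Ahat := hq
end

section
/- If A = [a_{ij}] and B = [b_{ij}] are n×n complex matrices with 0 ≤ a_{ij} ≤ b_{ij} for all i, j, then w(A) ≤ w(B). -/
lemma inner_toEuclideanCLM {n : ℕ} (M : Matrix (Fin n) (Fin n) ℂ) (x : EuclideanSpace ℂ (Fin n)) :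
    (inner ℂ (Matrix.toEuclideanCLM (𝕜 := ℂ) M x) x : ℂ)
      = ∑ i, ∑ j, (starRingEnd ℂ) (M i j * x j) * x i := by
  have : ∀ i, (Matrix.toEuclideanCLM (𝕜 := ℂ) M x) i = ∑ j, M i j * x j := fun i => rfl
  simp [PiLp.inner_apply, this, RCLike.inner_apply, Finset.sum_mul, Finset.mul_sum, mul_comm]

lemma bddAbove_numRadSet {H : Type*} [NormedAddCommGroup H] [InnerProductSpace ℂ H]
    (T : H →L[ℂ] H) :
    BddAbove {r : ℝ | ∃ x : H, ‖x‖ = 1 ∧ r = ‖(inner ℂ (T x) x : ℂ)‖} := by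
  refine ⟨‖T‖, ?_⟩
  rintro r ⟨x, hx, rfl⟩
  calc ‖(inner ℂ (T x) x : ℂ)‖ ≤ ‖T x‖ * ‖x‖ := norm_inner_le_norm _ _
    _ ≤ (‖T‖ * ‖x‖) * ‖x‖ := by
        exact mul_le_mul_of_nonneg_right (T.le_opNorm x) (norm_nonneg x)
    _ = ‖T‖ := by rw [hx]; ring

open ContinuousLinearMap
theorem stmt8 {n : ℕ} (A B : Matrix (Fin n) (Fin n) ℂ)
    (h : ∀ i j, ∃ a b : ℝ, 0 ≤ a ∧ a ≤ b ∧ A i j = (a : ℂ) ∧ B i j = (b : ℂ)) :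
    numRadMat A ≤ numRadMat B := by
  choose a b ha hab hA hB using h
  unfold numRadMat numRad
  apply Real.sSup_le
  · rintro r ⟨x, hx, rfl⟩
    set y : EuclideanSpace ℂ (Fin n) := WithLp.toLp 2 (fun i => (‖x i‖ : ℂ)) with hy_def
    have hy : ‖y‖ = 1 := by
      rw [← hx]
      simp [EuclideanSpace.norm_eq, hy_def]
    have hBy : (inner ℂ (Matrix.toEuclideanCLM (𝕜 := ℂ) B y) y : ℂ)
        = ((∑ i, ∑ j, b i j * ‖x j‖ * ‖x i‖ : ℝ) : ℂ) := by
      rw [inner_toEuclideanCLM]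
      push_cast
      refine Finset.sum_congr rfl fun i _ => Finset.sum_congr rfl fun j _ => ?_
      rw [hB]
      simp [hy_def, mul_comm, mul_assoc, mul_left_comm]
    have key : ‖(inner ℂ (Matrix.toEuclideanCLM (𝕜 := ℂ) A x) x : ℂ)‖
        ≤ ‖(inner ℂ (Matrix.toEuclideanCLM (𝕜 := ℂ) B y) y : ℂ)‖ := by
      rw [inner_toEuclideanCLM, hBy]
      calc ‖∑ i, ∑ j, (starRingEnd ℂ) (A i j * x j) * x i‖
          ≤ ∑ i, ∑ j, ‖(starRingEnd ℂ) (A i j * x j) * x i‖ := by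
            refine (norm_sum_le _ _).trans (Finset.sum_le_sum fun i _ => norm_sum_le _ _)
        _ = ∑ i, ∑ j, a i j * ‖x j‖ * ‖x i‖ := by
            refine Finset.sum_congr rfl fun i _ => Finset.sum_congr rfl fun j _ => ?_
            rw [hA]
            simp [abs_of_nonneg (ha i j)]
        _ ≤ ∑ i, ∑ j, b i j * ‖x j‖ * ‖x i‖ := by
            refine Finset.sum_le_sum fun i _ => Finset.sum_le_sum fun j _ => ?_
            have := mul_le_mul_of_nonneg_right (mul_le_mul_of_nonneg_right (hab i j)
              (norm_nonneg (x j))) (norm_nonneg (x i))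
            exact this
        _ ≤ ‖((∑ i, ∑ j, b i j * ‖x j‖ * ‖x i‖ : ℝ) : ℂ)‖ := by
            rw [Complex.norm_real]
            exact le_abs_self _
    refine key.trans (le_csSup (bddAbove_numRadSet _) ⟨y, hy, rfl⟩)
  · exact Real.sSup_nonneg (by rintro r ⟨x, hx, rfl⟩; exact norm_nonneg _)
end

section
/- For bounded linear operators B, C on a complex Hilbert space H, the off-diagonal operator matrix [[0, B],[C, 0]] on H ⊕ H satisfies w([[0,B],[C,0]]) ≤ (1/2) ‖|B| + |C*|‖^{1/2} · ‖|C| + |B*|‖^{1/2}. -/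
open Polynomial in
lemma aeval_intertwine {H : Type*} [NormedAddCommGroup H] [InnerProductSpace ℂ H]
    [CompleteSpace H] (T : H →L[ℂ] H) (q : ℝ[X]) :
    T * aeval (star T * T) q = aeval (T * star T) q * T := by
  induction q using Polynomial.induction_on with
  | C r => simpa using (Algebra.commutes r T).symm
  | add p q hp hq => simp [mul_add, add_mul, hp, hq]
  | monomial n r ih =>
      have key : ∀ m : ℕ, T * (star T * T) ^ m = (T * star T) ^ m * T := by
        intro m
        induction m with
        | zero => simp
        | succ k hk =>
            rw [pow_succ, pow_succ, ← mul_assoc, hk]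
            noncomm_ring
      simp only [map_mul, map_pow, aeval_C, aeval_X]
      calc T * (algebraMap ℝ _ r * (star T * T) ^ (n + 1))
          = algebraMap ℝ _ r * (T * (star T * T) ^ (n + 1)) := by
            rw [← mul_assoc, ← Algebra.commutes, mul_assoc]
        _ = algebraMap ℝ _ r * (T * star T) ^ (n + 1) * T := by rw [key]; noncomm_ring

lemma cfc_intertwine {H : Type*} [NormedAddCommGroup H] [InnerProductSpace ℂ H]
    [CompleteSpace H] (T : H →L[ℂ] H) (f : ℝ → ℝ) (hf : Continuous f) :
    T * cfc f (star T * T) = cfc f (T * star T) * T := by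
  set a := star T * T with ha
  set b := T * star T with hb
  have ha' : IsSelfAdjoint a := IsSelfAdjoint.star_mul_self T
  have hb' : IsSelfAdjoint b := IsSelfAdjoint.mul_star_self T
  set M : ℝ := max ‖a‖ ‖b‖ * ‖(1 : H →L[ℂ] H)‖ with hM
  set s : Set ℝ := Set.Icc (-M) M with hs
  have hsa : spectrum ℝ a ⊆ s := by
    intro x hx
    have := spectrum.norm_le_norm_mul_of_mem hx
    rw [Real.norm_eq_abs] at this
    refine Set.mem_Icc.2 (abs_le.1 (this.trans ?_))
    exact mul_le_mul_of_nonneg_right (le_max_left _ _) (norm_nonneg _)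
  have hsb : spectrum ℝ b ⊆ s := by
    intro x hx
    have := spectrum.norm_le_norm_mul_of_mem hx
    rw [Real.norm_eq_abs] at this
    refine Set.mem_Icc.2 (abs_le.1 (this.trans ?_))
    exact mul_le_mul_of_nonneg_right (le_max_right _ _) (norm_nonneg _)
  set D : H →L[ℂ] H := T * cfc f a - cfc f b * T with hD
  have key : ∀ ε : ℝ, 0 < ε → ‖D‖ ≤ 2 * ‖T‖ * ε := by
    intro ε hε
    -- density of polynomials
    have hdense : (ContinuousMap.restrict s ⟨f, hf⟩ : C(s, ℝ)) ∈
        closure ((polynomialFunctions s : Set C(s, ℝ))) := by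
      have h1 : ContinuousMap.restrict s ⟨f, hf⟩ ∈ (polynomialFunctions s).topologicalClosure := by
        rw [polynomialFunctions.topologicalClosure s]; trivial
      exact h1
    rw [Metric.mem_closure_iff] at hdense
    obtain ⟨g, hg, hdist⟩ := hdense ε hε
    rw [polynomialFunctions_coe] at hg
    obtain ⟨q, rfl⟩ := hg
    have hq : ∀ x ∈ s, |f x - q.eval x| ≤ ε := by
      intro x hx
      have := ContinuousMap.dist_apply_le_dist (f := ContinuousMap.restrict s ⟨f, hf⟩)
        (g := Polynomial.toContinuousMapOnAlgHom s q) ⟨x, hx⟩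
      rw [Real.dist_eq] at this
      exact this.trans hdist.le |>.trans (le_refl ε)
    have hna : ‖cfc f a - cfc q.eval a‖ ≤ ε := by
      rw [← cfc_sub f q.eval a (hf.continuousOn) (q.continuous_aeval.continuousOn)]
      exact norm_cfc_le hε.le fun x hx => by
        simpa [Real.norm_eq_abs] using hq x (hsa hx)
    have hnb : ‖cfc f b - cfc q.eval b‖ ≤ ε := by
      rw [← cfc_sub f q.eval b (hf.continuousOn) (q.continuous_aeval.continuousOn)]
      exact norm_cfc_le hε.le fun x hx => by
        simpa [Real.norm_eq_abs] using hq x (hsb hx)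
    have hpoly : T * cfc q.eval a = cfc q.eval b * T := by
      rw [cfc_polynomial q a, cfc_polynomial q b]
      exact aeval_intertwine T q
    have : D = T * (cfc f a - cfc q.eval a) - (cfc f b - cfc q.eval b) * T := by
      rw [hD]; rw [mul_sub, sub_mul, hpoly]; abel
    rw [this]
    calc ‖T * (cfc f a - cfc q.eval a) - (cfc f b - cfc q.eval b) * T‖
        ≤ ‖T * (cfc f a - cfc q.eval a)‖ + ‖(cfc f b - cfc q.eval b) * T‖ := norm_sub_le _ _
      _ ≤ ‖T‖ * ε + ε * ‖T‖ := add_le_add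
          ((norm_mul_le _ _).trans (mul_le_mul_of_nonneg_left hna (norm_nonneg T)))
          ((norm_mul_le _ _).trans (mul_le_mul_of_nonneg_right hnb (norm_nonneg T)))
      _ = 2 * ‖T‖ * ε := by ring
  have hD0 : ‖D‖ ≤ 0 := by
    refine le_of_forall_pos_le_add fun ε hε => ?_
    have hc : (0:ℝ) < 2 * ‖T‖ + 1 := by positivity
    calc ‖D‖ ≤ 2 * ‖T‖ * (ε / (2 * ‖T‖ + 1)) := key _ (by positivity)
      _ ≤ ε := by rw [mul_div_assoc', div_le_iff₀ hc]; nlinarith [norm_nonneg T]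
      _ = 0 + ε := (zero_add ε).symm
  have : D = 0 := by simpa using le_antisymm hD0 (norm_nonneg D)
  linear_combination (norm := module) this

open ContinuousLinearMap in
lemma absOp_eq_cfc {H : Type*} [NormedAddCommGroup H] [InnerProductSpace ℂ H]
    [CompleteSpace H] (T : H →L[ℂ] H) :
    absOp T = cfc Real.sqrt (star T * T) := by
  rw [absOp, ← star_eq_adjoint, CFC.sqrt_eq_cfc, cfc_nnreal_eq_real _ _ (star_mul_self_nonneg T)]
  exact cfc_congr fun x _ => by rw [Real.sqrt]

open ContinuousLinearMap RCLike in
lemma schwarz_eps {H : Type*} [NormedAddCommGroup H] [InnerProductSpace ℂ H]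
    [CompleteSpace H] (T : H →L[ℂ] H) (x y : H) {ε : ℝ} (hε : 0 < ε) :
    ‖(inner ℂ (T x) y : ℂ)‖ ^ 2 ≤
      (re (inner ℂ (absOp T x) x : ℂ) + ε * ‖x‖ ^ 2) *
        re (inner ℂ (absOp (adjoint T) y) y : ℂ) := by
  set a := star T * T with ha
  set b := T * star T with hb
  have ha0 : (0 : H →L[ℂ] H) ≤ a := star_mul_self_nonneg T
  have hb0 : (0 : H →L[ℂ] H) ≤ b := mul_star_self_nonneg T
  have haS : IsSelfAdjoint a := .of_nonneg ha0
  have hbS : IsSelfAdjoint b := .of_nonneg hb0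
  set f : ℝ → ℝ := fun s => Real.sqrt s + ε with hf
  set g : ℝ → ℝ := fun s => (Real.sqrt s + ε)⁻¹ with hg
  set u : ℝ → ℝ := fun s => Real.sqrt (Real.sqrt s + ε) with hu
  set v : ℝ → ℝ := fun s => (Real.sqrt (Real.sqrt s + ε))⁻¹ with hv
  have hfpos : ∀ s, 0 < f s := fun s => add_pos_of_nonneg_of_pos (Real.sqrt_nonneg s) hε
  have hupos : ∀ s, 0 < u s := fun s => Real.sqrt_pos.2 (hfpos s)
  have hfc : Continuous f := Real.continuous_sqrt.add continuous_const
  have hgc : Continuous g := hfc.inv₀ fun s => (hfpos s).ne'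
  have huc : Continuous u := Real.continuous_sqrt.comp hfc
  have hvc : Continuous v := huc.inv₀ fun s => (hupos s).ne'
  set S := cfc u a with hS
  set Sinv := cfc v a with hSinv
  have hSS : S * S = cfc f a := by
    rw [hS, ← cfc_mul u u a huc.continuousOn huc.continuousOn]
    exact cfc_congr fun s _ => Real.mul_self_sqrt (hfpos s).le
  have hSinv2 : Sinv * Sinv = cfc g a := by
    rw [hSinv, ← cfc_mul v v a hvc.continuousOn hvc.continuousOn]
    refine cfc_congr fun s _ => ?_
    rw [hv, hg]
    simp only [← mul_inv]
    rw [Real.mul_self_sqrt (hfpos s).le]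
  have hSid : S * Sinv = 1 := by
    rw [hS, hSinv, ← cfc_mul u v a huc.continuousOn hvc.continuousOn]
    have : cfc (fun s => u s * v s) a = cfc (fun _ : ℝ => (1:ℝ)) a :=
      cfc_congr fun s _ => mul_inv_cancel₀ (hupos s).ne'
    rw [this, cfc_const 1 a, map_one]
  have hSsa : IsSelfAdjoint S := cfc_predicate u a
  have hSinvsa : IsSelfAdjoint Sinv := cfc_predicate v a
  have sq_norm : ∀ (R : H →L[ℂ] H), IsSelfAdjoint R → ∀ z : H,
      ‖R z‖ ^ 2 = re (inner ℂ ((R * R) z) z : ℂ) := by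
    intro R hR z
    calc ‖R z‖ ^ 2 = re (inner ℂ (R z) (R z) : ℂ) := (inner_self_eq_norm_sq _).symm
      _ = re (inner ℂ ((adjoint R) (R z)) z : ℂ) := by rw [adjoint_inner_left]
      _ = re (inner ℂ ((R * R) z) z : ℂ) := by rw [hR.adjoint_eq, ContinuousLinearMap.mul_apply]
  set w := adjoint T y with hw
  have key1 : (inner ℂ (T x) y : ℂ) = inner ℂ (S x) (Sinv w) := by
    have h1 : (inner ℂ (S x) (Sinv w) : ℂ) = inner ℂ x (S (Sinv w)) := by
      conv_lhs => rw [← hSsa.adjoint_eq]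
      rw [adjoint_inner_left]
    have h2 : S (Sinv w) = w := by rw [← ContinuousLinearMap.mul_apply, hSid, ContinuousLinearMap.one_apply]
    rw [h1, h2, hw, adjoint_inner_right]
  -- first factor
  have fact1 : ‖S x‖ ^ 2 = re (inner ℂ (absOp T x) x : ℂ) + ε * ‖x‖ ^ 2 := by
    rw [sq_norm S hSsa x, hSS]
    have : cfc f a = absOp T + algebraMap ℝ (H →L[ℂ] H) ε := by
      rw [absOp_eq_cfc, ← ha, ← cfc_const ε a, ← cfc_add a Real.sqrt (fun _ => ε)
        Real.continuous_sqrt.continuousOn continuousOn_const]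
    rw [this]
    have happ : (absOp T + algebraMap ℝ (H →L[ℂ] H) ε) x = absOp T x + ((ε : ℝ) : ℂ) • x := by
      rw [add_apply, Algebra.algebraMap_eq_smul_one, smul_apply, ContinuousLinearMap.one_apply]
      exact congrArg _ (RCLike.real_smul_eq_coe_smul (K := ℂ) ε x)
    rw [happ, inner_add_left, map_add, inner_smul_left, Complex.conj_ofReal]
    congr 1
    change (Complex.ofReal ε * _).re = _
    rw [Complex.re_ofReal_mul]
    congr 1
    exact inner_self_eq_norm_sq (𝕜 := ℂ) x
  -- second factor
  have fact2 : ‖Sinv w‖ ^ 2 ≤ re (inner ℂ (absOp (adjoint T) y) y : ℂ) := by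
    have e1 : ‖Sinv w‖ ^ 2 = re (inner ℂ ((T * cfc g a * star T) y) y : ℂ) := by
      rw [sq_norm Sinv hSinvsa w, hSinv2]
      have : (T * cfc g a * star T) y = T (cfc g a w) := by
        rw [ContinuousLinearMap.mul_apply, ContinuousLinearMap.mul_apply]; rfl
      rw [this]
      show re (inner ℂ ((cfc g a) w) ((adjoint T) y) : ℂ) = _
      rw [adjoint_inner_right]
    have e2 : T * cfc g a * star T = cfc (fun s => g s * s) b := by
      refine Eq.symm ?_
      calc cfc (fun s => g s * s) b = cfc g b * cfc (fun s : ℝ => s) b :=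
            cfc_mul g (fun s : ℝ => s) b hgc.continuousOn continuousOn_id
        _ = cfc g b * b := by rw [cfc_id' ℝ b]
        _ = T * cfc g a * star T := by
              rw [hb, ← mul_assoc, ← cfc_intertwine T g hgc, ← ha]
    have e3 : cfc (fun s => g s * s) b ≤ cfc Real.sqrt b := by
      refine cfc_mono (fun s hs => ?_) (hgc.mul continuous_id).continuousOn
        Real.continuous_sqrt.continuousOn
      have hs0 : 0 ≤ s := spectrum_nonneg_of_nonneg hb0 hs
      rw [hg]
      have h1 : Real.sqrt s * Real.sqrt s = s := Real.mul_self_sqrt hs0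
      rw [inv_mul_le_iff₀ (hfpos s)]
      simp only [hf]
      nlinarith [Real.sqrt_nonneg s, hε]
    have e4 : absOp (adjoint T) = cfc Real.sqrt b := by
      rw [absOp_eq_cfc (adjoint T), star_eq_adjoint, adjoint_adjoint, ← star_eq_adjoint, ← hb]
    rw [e1, e2, e4]
    have hle := e3
    rw [ContinuousLinearMap.le_def] at hle
    have h5 := hle.re_inner_nonneg_left y
    simp only [reApplyInnerSelf_apply, sub_apply, inner_sub_left, map_sub] at h5
    linarith
  -- combine
  have step : ‖(inner ℂ (T x) y : ℂ)‖ ≤ ‖S x‖ * ‖Sinv w‖ := by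
    rw [key1]; exact norm_inner_le_norm _ _
  calc ‖(inner ℂ (T x) y : ℂ)‖ ^ 2 ≤ (‖S x‖ * ‖Sinv w‖) ^ 2 := by
        exact pow_le_pow_left₀ (norm_nonneg _) step 2
    _ = ‖S x‖ ^ 2 * ‖Sinv w‖ ^ 2 := by ring
    _ ≤ ‖S x‖ ^ 2 * re (inner ℂ (absOp (adjoint T) y) y : ℂ) := by
        exact mul_le_mul_of_nonneg_left fact2 (by positivity)
    _ = (re (inner ℂ (absOp T x) x : ℂ) + ε * ‖x‖ ^ 2) * _ := by rw [fact1]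

open ContinuousLinearMap RCLike

lemma absOp_nonneg {H : Type*} [NormedAddCommGroup H] [InnerProductSpace ℂ H]
    [CompleteSpace H] (T : H →L[ℂ] H) (z : H) :
    0 ≤ re (inner ℂ (absOp T z) z : ℂ) := by
  have h : (0 : H →L[ℂ] H) ≤ absOp T := by
    rw [absOp_eq_cfc]
    exact cfc_nonneg fun s _ => Real.sqrt_nonneg s
  rw [ContinuousLinearMap.nonneg_iff_isPositive] at h
  exact h.re_inner_nonneg_left z

lemma mixed_schwarz_s11 {H : Type*} [NormedAddCommGroup H] [InnerProductSpace ℂ H]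
    [CompleteSpace H] (T : H →L[ℂ] H) (x y : H) :
    ‖(inner ℂ (T x) y : ℂ)‖ ≤
      Real.sqrt (re (inner ℂ (absOp T x) x : ℂ)) *
        Real.sqrt (re (inner ℂ (absOp (adjoint T) y) y : ℂ)) := by
  set p := re (inner ℂ (absOp T x) x : ℂ) with hp
  set q := re (inner ℂ (absOp (adjoint T) y) y : ℂ) with hq
  have hp0 : 0 ≤ p := absOp_nonneg T x
  have hq0 : 0 ≤ q := absOp_nonneg (adjoint T) y
  have hsq : ‖(inner ℂ (T x) y : ℂ)‖ ^ 2 ≤ p * q := by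
    refine le_of_forall_pos_le_add fun δ hδ => ?_
    have hc : (0:ℝ) < ‖x‖ ^ 2 * q + 1 := by positivity
    have key := schwarz_eps T x y (ε := δ / (‖x‖ ^ 2 * q + 1)) (by positivity)
    refine key.trans ?_
    rw [add_mul]
    have h2 : δ / (‖x‖ ^ 2 * q + 1) * ‖x‖ ^ 2 * q ≤ δ := by
      rw [div_mul_eq_mul_div, div_mul_eq_mul_div, div_le_iff₀ hc]
      nlinarith [sq_nonneg (‖x‖ : ℝ)]
    linarith
  calc ‖(inner ℂ (T x) y : ℂ)‖ = Real.sqrt (‖(inner ℂ (T x) y : ℂ)‖ ^ 2) :=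
        (Real.sqrt_sq (norm_nonneg _)).symm
    _ ≤ Real.sqrt (p * q) := Real.sqrt_le_sqrt hsq
    _ = Real.sqrt p * Real.sqrt q := Real.sqrt_mul hp0 q

open ContinuousLinearMap RCLike

set_option maxHeartbeats 1000000 in
theorem stmt11 {H : Type*} [NormedAddCommGroup H] [InnerProductSpace ℂ H] [CompleteSpace H]
    (B C : H →L[ℂ] H)
    (T : PiLp 2 (fun _ : Fin 2 => H) →L[ℂ] PiLp 2 (fun _ : Fin 2 => H))
    (hT : ∀ x : PiLp 2 (fun _ : Fin 2 => H), T x 0 = B (x 1) ∧ T x 1 = C (x 0)) :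
    numRad T ≤ (1 / 2) * (Real.sqrt ‖absOp B + absOp (adjoint C)‖ *
      Real.sqrt ‖absOp C + absOp (adjoint B)‖) := by
  set N1 : ℝ := ‖absOp B + absOp (adjoint C)‖ with hN1
  set N2 : ℝ := ‖absOp C + absOp (adjoint B)‖ with hN2
  refine Real.sSup_le ?_ (by positivity)
  rintro r ⟨x, hx, rfl⟩
  set x0 := x 0 with hx0
  set x1 := x 1 with hx1
  have hx2 : ‖x0‖ ^ 2 + ‖x1‖ ^ 2 = 1 := by
    have := PiLp.norm_sq_eq_of_L2 (fun _ : Fin 2 => H) x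
    rw [hx, Fin.sum_univ_two] at this
    simp at this
    linarith [this]
  have hinner : (inner ℂ (T x) x : ℂ) = inner ℂ (B x1) x0 + inner ℂ (C x0) x1 := by
    rw [PiLp.inner_apply, Fin.sum_univ_two, (hT x).1, (hT x).2]
  set a := re (inner ℂ (absOp B x1) x1 : ℂ) with hha
  set b := re (inner ℂ (absOp (adjoint B) x0) x0 : ℂ) with hhb
  set c := re (inner ℂ (absOp C x0) x0 : ℂ) with hhc
  set d := re (inner ℂ (absOp (adjoint C) x1) x1 : ℂ) with hhd
  have ha0 : 0 ≤ a := absOp_nonneg B x1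
  have hb0 : 0 ≤ b := absOp_nonneg (adjoint B) x0
  have hc0 : 0 ≤ c := absOp_nonneg C x0
  have hd0 : 0 ≤ d := absOp_nonneg (adjoint C) x1
  have step1 : ‖(inner ℂ (T x) x : ℂ)‖ ≤
      Real.sqrt a * Real.sqrt b + Real.sqrt c * Real.sqrt d := by
    rw [hinner]
    exact (norm_add_le _ _).trans (add_le_add (mixed_schwarz_s11 B x1 x0) (mixed_schwarz_s11 C x0 x1))
  have step2 : Real.sqrt a * Real.sqrt b + Real.sqrt c * Real.sqrt d ≤
      Real.sqrt (a + d) * Real.sqrt (b + c) := by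
    have hsq : (Real.sqrt a * Real.sqrt b + Real.sqrt c * Real.sqrt d) ^ 2 ≤
        (a + d) * (b + c) := by
      nlinarith [Real.sq_sqrt ha0, Real.sq_sqrt hb0, Real.sq_sqrt hc0, Real.sq_sqrt hd0,
        Real.sqrt_nonneg a, Real.sqrt_nonneg b, Real.sqrt_nonneg c, Real.sqrt_nonneg d,
        sq_nonneg (Real.sqrt a * Real.sqrt c - Real.sqrt b * Real.sqrt d)]
    calc Real.sqrt a * Real.sqrt b + Real.sqrt c * Real.sqrt d
        = Real.sqrt ((Real.sqrt a * Real.sqrt b + Real.sqrt c * Real.sqrt d) ^ 2) :=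
          (Real.sqrt_sq (by positivity)).symm
      _ ≤ Real.sqrt ((a + d) * (b + c)) := Real.sqrt_le_sqrt hsq
      _ = Real.sqrt (a + d) * Real.sqrt (b + c) := Real.sqrt_mul (by linarith) _
  have opbound : ∀ (Q : H →L[ℂ] H) (z : H), re (inner ℂ (Q z) z : ℂ) ≤ ‖Q‖ * ‖z‖ ^ 2 := by
    intro Q z
    calc re (inner ℂ (Q z) z : ℂ) ≤ |re (inner ℂ (Q z) z : ℂ)| := le_abs_self _
      _ ≤ ‖(inner ℂ (Q z) z : ℂ)‖ := abs_re_le_norm _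
      _ ≤ ‖Q z‖ * ‖z‖ := norm_inner_le_norm _ _
      _ ≤ ‖Q‖ * ‖z‖ * ‖z‖ := by gcongr; exact Q.le_opNorm z
      _ = ‖Q‖ * ‖z‖ ^ 2 := by ring
  have had : a + d ≤ N1 * ‖x1‖ ^ 2 := by
    have : a + d = re (inner ℂ ((absOp B + absOp (adjoint C)) x1) x1 : ℂ) := by
      rw [add_apply, inner_add_left, map_add]
    rw [this, hN1]
    exact opbound _ x1
  have hbc : b + c ≤ N2 * ‖x0‖ ^ 2 := by
    have : b + c = re (inner ℂ ((absOp C + absOp (adjoint B)) x0) x0 : ℂ) := by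
      rw [add_apply, inner_add_left, map_add]; ring
    rw [this, hN2]
    exact opbound _ x0
  have hN10 : 0 ≤ N1 := norm_nonneg _
  have hN20 : 0 ≤ N2 := norm_nonneg _
  have step3 : Real.sqrt (a + d) * Real.sqrt (b + c) ≤
      (Real.sqrt N1 * ‖x1‖) * (Real.sqrt N2 * ‖x0‖) := by
    have h1 : Real.sqrt (a + d) ≤ Real.sqrt N1 * ‖x1‖ := by
      refine (Real.sqrt_le_sqrt had).trans ?_
      rw [Real.sqrt_mul hN10, Real.sqrt_sq (norm_nonneg _)]
    have h2 : Real.sqrt (b + c) ≤ Real.sqrt N2 * ‖x0‖ := by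
      refine (Real.sqrt_le_sqrt hbc).trans ?_
      rw [Real.sqrt_mul hN20, Real.sqrt_sq (norm_nonneg _)]
    exact mul_le_mul h1 h2 (Real.sqrt_nonneg _) (by positivity)
  have step4 : (Real.sqrt N1 * ‖x1‖) * (Real.sqrt N2 * ‖x0‖) ≤
      1 / 2 * (Real.sqrt N1 * Real.sqrt N2) := by
    have hx01 : ‖x0‖ * ‖x1‖ ≤ 1 / 2 := by nlinarith [sq_nonneg (‖x0‖ - ‖x1‖)]
    calc (Real.sqrt N1 * ‖x1‖) * (Real.sqrt N2 * ‖x0‖)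
        = (Real.sqrt N1 * Real.sqrt N2) * (‖x0‖ * ‖x1‖) := by ring
      _ ≤ (Real.sqrt N1 * Real.sqrt N2) * (1 / 2) := by
          exact mul_le_mul_of_nonneg_left hx01 (by positivity)
      _ = 1 / 2 * (Real.sqrt N1 * Real.sqrt N2) := by ring
  linarith [step1, step2, step3, step4]
end

section
/- If B, C are self-adjoint bounded linear operators on a complex Hilbert space H, then (1/2)‖B + C‖ ≤ w([[0, B],[C, 0]]) and (1/2)‖B − C‖ ≤ w([[0, B],[C, 0]]) ≤ (1/2)‖|B| + |C|‖. -/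
section Aux

open ContinuousLinearMap RCLike

variable {H : Type*} [NormedAddCommGroup H] [InnerProductSpace ℂ H] [CompleteSpace H]

lemma absOp_eq_posPart_add_negPart (B : H →L[ℂ] H) (hB : IsSelfAdjoint B) :
    absOp B = B⁺ + B⁻ := by
  have h2 : (0:H →L[ℂ] H) ≤ B⁺ + B⁻ := add_nonneg (CFC.posPart_nonneg B) (CFC.negPart_nonneg B)
  have h1 : B⁺ - B⁻ = B := CFC.posPart_sub_negPart B hB
  have h3 : (B⁺ + B⁻) * (B⁺ + B⁻) = B * B := by
    conv_rhs => rw [← h1]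
    simp only [mul_add, add_mul, sub_mul, mul_sub, CFC.posPart_mul_negPart,
      CFC.negPart_mul_posPart]
    abel
  rw [absOp, hB.adjoint_eq, ← h3, CFC.sqrt_mul_self _ h2]

lemma pos_inner_sqrt (P : H →L[ℂ] H) (hP : (0:H →L[ℂ] H) ≤ P) (x y : H) :
    (inner ℂ (P x) y : ℂ) = inner ℂ (CFC.sqrt P x) (CFC.sqrt P y) := by
  have hsa : IsSelfAdjoint (CFC.sqrt P) := IsSelfAdjoint.of_nonneg (CFC.sqrt_nonneg P)
  conv_lhs => rw [← CFC.sqrt_mul_sqrt_self P hP]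
  rw [ContinuousLinearMap.mul_apply, ← ContinuousLinearMap.adjoint_inner_right, hsa.adjoint_eq]

lemma pos_inner_bound (P : H →L[ℂ] H) (hP : (0:H →L[ℂ] H) ≤ P) (x y : H) :
    ‖(inner ℂ (P x) y : ℂ)‖ ≤ (re (inner ℂ (P x) x : ℂ) + re (inner ℂ (P y) y : ℂ)) / 2 := by
  rw [pos_inner_sqrt P hP x y, pos_inner_sqrt P hP x x, pos_inner_sqrt P hP y y]
  rw [inner_self_eq_norm_sq, inner_self_eq_norm_sq]
  calc ‖(inner ℂ (CFC.sqrt P x) (CFC.sqrt P y) : ℂ)‖ ≤ ‖CFC.sqrt P x‖ * ‖CFC.sqrt P y‖ :=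
        norm_inner_le_norm _ _
    _ ≤ (‖CFC.sqrt P x‖ ^ 2 + ‖CFC.sqrt P y‖ ^ 2) / 2 := by
        nlinarith [sq_nonneg (‖CFC.sqrt P x‖ - ‖CFC.sqrt P y‖)]

lemma key_inner_bound (S : H →L[ℂ] H) (hS : IsSelfAdjoint S) (x y : H) :
    ‖(inner ℂ (S x) y : ℂ)‖ ≤
      (re (inner ℂ (absOp S x) x : ℂ) + re (inner ℂ (absOp S y) y : ℂ)) / 2 := by
  rw [absOp_eq_posPart_add_negPart S hS]
  have h1 : S x = S⁺ x - S⁻ x := by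
    conv_lhs => rw [← CFC.posPart_sub_negPart S hS]
    simp
  have h2 := pos_inner_bound S⁺ (CFC.posPart_nonneg S) x y
  have h3 := pos_inner_bound S⁻ (CFC.negPart_nonneg S) x y
  have h4 : ‖(inner ℂ (S x) y : ℂ)‖ ≤ ‖(inner ℂ (S⁺ x) y : ℂ)‖ + ‖(inner ℂ (S⁻ x) y : ℂ)‖ := by
    rw [h1, inner_sub_left]
    exact norm_sub_le _ _
  have e1 : ∀ z : H, (inner ℂ ((S⁺ + S⁻) z) z : ℂ) = inner ℂ (S⁺ z) z + inner ℂ (S⁻ z) z := by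
    intro z; simp [inner_add_left]
  simp only [e1, map_add]
  linarith

lemma norm_le_of_inner_bound (S : H →L[ℂ] H) (hS : IsSelfAdjoint S) {r : ℝ} (hr : 0 ≤ r)
    (h : ∀ x : H, ‖(inner ℂ (S x) x : ℂ)‖ ≤ r * ‖x‖ ^ 2) : ‖S‖ ≤ r := by
  refine S.opNorm_le_bound hr fun x => ?_
  rcases eq_or_ne x 0 with rfl | hx
  · simp
  rcases eq_or_ne (S x) 0 with h0 | h0
  · rw [h0, norm_zero]; positivity
  have hsymm : ∀ u v : H, (inner ℂ (S u) v : ℂ) + inner ℂ (S v) u =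
      2 * re (inner ℂ (S u) v : ℂ) := by
    intro u v
    have : (inner ℂ (S v) u : ℂ) = starRingEnd ℂ (inner ℂ (S u) v : ℂ) := by
      have h1 : (inner ℂ (S v) u : ℂ) = inner ℂ v (S u) :=
        (isSelfAdjoint_iff_isSymmetric.mp hS) v u
      rw [h1]
      exact (inner_conj_symm _ _).symm
    rw [this, Complex.add_conj]
    norm_num
  set y : H := ((‖x‖ / ‖S x‖ : ℝ) : ℂ) • S x with hy
  have hne : (‖S x‖ : ℝ) ≠ 0 := norm_ne_zero_iff.mpr h0
  have hyn : ‖y‖ = ‖x‖ := by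
    rw [hy, norm_smul]
    simp [norm_div, abs_of_nonneg (norm_nonneg x), div_mul_cancel₀, hne]
  have hre : re (inner ℂ (S x) y : ℂ) = ‖x‖ * ‖S x‖ := by
    have hsq := inner_self_eq_norm_sq (𝕜 := ℂ) (S x)
    simp only [RCLike.re_to_complex] at hsq ⊢
    rw [hy, inner_smul_right, Complex.re_ofReal_mul, hsq]
    field_simp
  have hpol : re (inner ℂ (S (x + y)) (x + y) : ℂ) - re (inner ℂ (S (x - y)) (x - y) : ℂ)
      = 4 * re (inner ℂ (S x) y : ℂ) := by
    have e1 : (inner ℂ (S (x + y)) (x + y) : ℂ)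
        = inner ℂ (S x) x + (inner ℂ (S x) y + inner ℂ (S y) x) + inner ℂ (S y) y := by
      simp [inner_add_left, inner_add_right]; ring
    have e2 : (inner ℂ (S (x - y)) (x - y) : ℂ)
        = inner ℂ (S x) x - (inner ℂ (S x) y + inner ℂ (S y) x) + inner ℂ (S y) y := by
      simp [inner_sub_left, inner_sub_right]; ring
    rw [e1, e2, hsymm x y]
    simp
    ring
  have hpar := parallelogram_law_with_norm ℂ x y
  have b1 := h (x + y)
  have b2 := h (x - y)
  have c1 : re (inner ℂ (S (x+y)) (x+y) : ℂ) ≤ ‖(inner ℂ (S (x+y)) (x+y) : ℂ)‖ := re_le_norm _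
  have c2 : -re (inner ℂ (S (x-y)) (x-y) : ℂ) ≤ ‖(inner ℂ (S (x-y)) (x-y) : ℂ)‖ := by
    have := re_le_norm (-(inner ℂ (S (x-y)) (x-y) : ℂ)); simpa only [map_neg, norm_neg] using this
  have key : ‖x‖ * ‖S x‖ ≤ r * ‖x‖ ^ 2 := by
    have h4 : 4 * (‖x‖ * ‖S x‖) ≤ r * (‖x + y‖ ^ 2 + ‖x - y‖ ^ 2) := by
      rw [← hre, ← hpol]; nlinarith
    have hp2 : ‖x + y‖ ^ 2 + ‖x - y‖ ^ 2 = 2 * (‖x‖ ^ 2 + ‖y‖ ^ 2) := by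
      nlinarith [hpar]
    rw [hp2, hyn] at h4
    nlinarith
  have hxpos : (0:ℝ) < ‖x‖ := norm_pos_iff.mpr hx
  nlinarith [key, hxpos]

end Aux

open ContinuousLinearMap
theorem stmt12 {H : Type*} [NormedAddCommGroup H] [InnerProductSpace ℂ H] [CompleteSpace H]
    (B C : H →L[ℂ] H) (hB : IsSelfAdjoint B) (hC : IsSelfAdjoint C)
    (T : PiLp 2 (fun _ : Fin 2 => H) →L[ℂ] PiLp 2 (fun _ : Fin 2 => H))
    (hT : ∀ x : PiLp 2 (fun _ : Fin 2 => H), T x 0 = B (x 1) ∧ T x 1 = C (x 0)) :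
    (1 / 2) * ‖B + C‖ ≤ numRad T ∧ (1 / 2) * ‖B - C‖ ≤ numRad T ∧
      numRad T ≤ (1 / 2) * ‖absOp B + absOp C‖ := by
  classical
  set s : Set ℝ :=
    {r : ℝ | ∃ x : PiLp 2 (fun _ : Fin 2 => H), ‖x‖ = 1 ∧ r = ‖(inner ℂ (T x) x : ℂ)‖} with hs
  have hnum : numRad T = sSup s := rfl
  have hbdd : BddAbove s := by
    refine ⟨‖T‖, fun r hr => ?_⟩
    obtain ⟨x, hx1, rfl⟩ := hr
    calc ‖(inner ℂ (T x) x : ℂ)‖ ≤ ‖T x‖ * ‖x‖ := norm_inner_le_norm _ _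
      _ ≤ ‖T‖ * ‖x‖ * ‖x‖ := by
          have := T.le_opNorm x
          nlinarith [norm_nonneg (T x), norm_nonneg x]
      _ = ‖T‖ := by rw [hx1]; ring
  have hnn : 0 ≤ numRad T := by
    rw [hnum]
    exact Real.sSup_nonneg (fun r hr => by obtain ⟨x, _, rfl⟩ := hr; positivity)
  have hmem : ∀ u : PiLp 2 (fun _ : Fin 2 => H), ‖u‖ = 1 →
      ‖(inner ℂ (T u) u : ℂ)‖ ≤ numRad T := fun u hu =>
    le_csSup hbdd ⟨u, hu, rfl⟩
  -- inner product of T u with u for u = (a, b)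
  have hTinner : ∀ u : PiLp 2 (fun _ : Fin 2 => H),
      (inner ℂ (T u) u : ℂ) = inner ℂ (B (u 1)) (u 0) + inner ℂ (C (u 0)) (u 1) := by
    intro u
    rw [PiLp.inner_apply, Fin.sum_univ_two, (hT u).1, (hT u).2]
  -- the lower bound machine
  have hlow : ∀ lam : ℂ, ‖lam‖ = 1 → ∀ x : H,
      ‖(starRingEnd ℂ lam * inner ℂ (B x) x + lam * inner ℂ (C x) x : ℂ)‖
        ≤ 2 * numRad T * ‖x‖ ^ 2 := by
    intro lam hlam x
    rcases eq_or_ne x 0 with rfl | hx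
    · simp
    have hxpos : (0:ℝ) < ‖x‖ := norm_pos_iff.mpr hx
    set c : ℝ := (Real.sqrt 2 * ‖x‖)⁻¹ with hcdef
    have hc : 0 < c := by
      apply inv_pos.mpr
      positivity
    set u : PiLp 2 (fun _ : Fin 2 => H) := WithLp.toLp 2 ![(c:ℂ) • x, ((c:ℂ) * lam) • x] with hu
    have hu0 : u 0 = (c:ℂ) • x := rfl
    have hu1 : u 1 = ((c:ℂ) * lam) • x := rfl
    have hnorm1 : ‖u 1‖ = c * ‖x‖ := by
      rw [hu1, norm_smul, norm_mul, hlam, Complex.norm_real]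
      simp [abs_of_pos hc]
    have hnorm0 : ‖u 0‖ = c * ‖x‖ := by
      rw [hu0, norm_smul, Complex.norm_real]
      simp [abs_of_pos hc]
    have hc2 : c ^ 2 * (2 * ‖x‖ ^ 2) = 1 := by
      have hs2 : (Real.sqrt 2) ^ 2 = 2 := Real.sq_sqrt (by norm_num)
      have hsq : (Real.sqrt 2 * ‖x‖) ^ 2 = 2 * ‖x‖ ^ 2 := by rw [mul_pow, hs2]
      rw [hcdef, inv_pow, hsq]
      exact inv_mul_cancel₀ (by positivity)
    have hun : ‖u‖ = 1 := by
      rw [PiLp.norm_eq_of_L2, Fin.sum_univ_two, hnorm0, hnorm1]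
      rw [show (c * ‖x‖) ^ 2 + (c * ‖x‖) ^ 2 = c ^ 2 * (2 * ‖x‖ ^ 2) by ring, hc2]
      exact Real.sqrt_one
    have hinner : (inner ℂ (T u) u : ℂ)
        = (c:ℂ) ^ 2 * (starRingEnd ℂ lam * inner ℂ (B x) x + lam * inner ℂ (C x) x) := by
      rw [hTinner u, hu0, hu1, map_smul, map_smul, inner_smul_left, inner_smul_right,
        inner_smul_left, inner_smul_right]
      simp only [map_mul, Complex.conj_ofReal]
      ring
    have hb := hmem u hun
    rw [hinner] at hb
    rw [norm_mul, norm_pow, Complex.norm_real] at hb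
    have habs : |c| = c := abs_of_pos hc
    rw [Real.norm_eq_abs, habs] at hb
    have hfinal : ‖(starRingEnd ℂ lam * inner ℂ (B x) x + lam * inner ℂ (C x) x : ℂ)‖
        = c ^ 2 * (2 * ‖x‖ ^ 2) *
          ‖(starRingEnd ℂ lam * inner ℂ (B x) x + lam * inner ℂ (C x) x : ℂ)‖ := by
      rw [hc2, one_mul]
    rw [hfinal]
    calc c ^ 2 * (2 * ‖x‖ ^ 2) *
          ‖(starRingEnd ℂ lam * inner ℂ (B x) x + lam * inner ℂ (C x) x : ℂ)‖
        = 2 * ‖x‖ ^ 2 * (c ^ 2 *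
          ‖(starRingEnd ℂ lam * inner ℂ (B x) x + lam * inner ℂ (C x) x : ℂ)‖) := by ring
      _ ≤ 2 * ‖x‖ ^ 2 * numRad T := by
          apply mul_le_mul_of_nonneg_left hb (by positivity)
      _ = 2 * numRad T * ‖x‖ ^ 2 := by ring
  refine ⟨?_, ?_, ?_⟩
  · -- first inequality
    have h1 : ‖B + C‖ ≤ 2 * numRad T := by
      apply norm_le_of_inner_bound (B + C) (hB.add hC) (by linarith)
      intro x
      have := hlow 1 (by simp) x
      simpa [add_apply, inner_add_left] using this
    linarith
  · -- second inequality
    have h1 : ‖B - C‖ ≤ 2 * numRad T := by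
      apply norm_le_of_inner_bound (B - C) (hB.sub hC) (by linarith)
      intro x
      have h2 := hlow Complex.I (by simp) x
      have e : (starRingEnd ℂ Complex.I * inner ℂ (B x) x + Complex.I * inner ℂ (C x) x : ℂ)
          = Complex.I * ((inner ℂ (C x) x : ℂ) - inner ℂ (B x) x) := by
        rw [Complex.conj_I]; ring
      rw [e, norm_mul, Complex.norm_I, one_mul] at h2
      have e2 : ‖(inner ℂ ((B - C) x) x : ℂ)‖
          = ‖((inner ℂ (C x) x : ℂ) - inner ℂ (B x) x)‖ := by
        rw [sub_apply, inner_sub_left, ← norm_neg]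
        congr 1
        ring
      rw [e2]
      exact h2
    linarith
  · -- third inequality
    rw [hnum]
    apply Real.sSup_le _ (by positivity)
    rintro r ⟨u, hu1, rfl⟩
    have hsum : ‖u 0‖ ^ 2 + ‖u 1‖ ^ 2 = 1 := by
      have := PiLp.norm_eq_of_L2 u
      rw [hu1, Fin.sum_univ_two] at this
      have h2 : Real.sqrt (‖u 0‖ ^ 2 + ‖u 1‖ ^ 2) = 1 := this.symm
      nlinarith [Real.sq_sqrt (by positivity : (0:ℝ) ≤ ‖u 0‖ ^ 2 + ‖u 1‖ ^ 2), h2]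
    have k1 := key_inner_bound B hB (u 1) (u 0)
    have k2 := key_inner_bound C hC (u 0) (u 1)
    have bnd : ∀ v : H, RCLike.re (inner ℂ ((absOp B + absOp C) v) v : ℂ)
        ≤ ‖absOp B + absOp C‖ * ‖v‖ ^ 2 := by
      intro v
      calc RCLike.re (inner ℂ ((absOp B + absOp C) v) v : ℂ)
          ≤ ‖(inner ℂ ((absOp B + absOp C) v) v : ℂ)‖ := RCLike.re_le_norm _
        _ ≤ ‖(absOp B + absOp C) v‖ * ‖v‖ := norm_inner_le_norm _ _
        _ ≤ ‖absOp B + absOp C‖ * ‖v‖ ^ 2 := by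
            have := (absOp B + absOp C).le_opNorm v
            nlinarith [norm_nonneg ((absOp B + absOp C) v), norm_nonneg v]
    have e1 : ∀ v : H, RCLike.re (inner ℂ ((absOp B + absOp C) v) v : ℂ)
        = RCLike.re (inner ℂ (absOp B v) v : ℂ) + RCLike.re (inner ℂ (absOp C v) v : ℂ) := by
      intro v
      rw [add_apply, inner_add_left, map_add]
    have b0 := bnd (u 0)
    have b1 := bnd (u 1)
    rw [e1] at b0 b1
    have htu : ‖(inner ℂ (T u) u : ℂ)‖
        ≤ ‖(inner ℂ (B (u 1)) (u 0) : ℂ)‖ + ‖(inner ℂ (C (u 0)) (u 1) : ℂ)‖ := by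
      rw [hTinner u]
      exact norm_add_le _ _
    have hN : (0:ℝ) ≤ ‖absOp B + absOp C‖ := norm_nonneg _
    nlinarith [k1, k2, htu, b0, b1, hsum]
end

section
/- If B, C are positive semidefinite bounded linear operators on a complex Hilbert space H, then w([[0, B],[C, 0]]) = (1/2)‖B + C‖. -/
open ContinuousLinearMap RCLike

section Aux

variable {H : Type*} [NormedAddCommGroup H] [InnerProductSpace ℂ H] [CompleteSpace H]

set_option maxHeartbeats 1000000 in
set_option synthInstance.maxHeartbeats 200000 in
/-- Cauchy–Schwarz for a positive operator. -/
lemma pos_cs {P : H →L[ℂ] H} (hP : P.IsPositive) (u v : H) :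
    ‖(inner ℂ (P u) v : ℂ)‖ ≤
      Real.sqrt (re (inner ℂ (P u) u : ℂ)) * Real.sqrt (re (inner ℂ (P v) v : ℂ)) := by
  have hP' : (0 : H →L[ℂ] H) ≤ P := (nonneg_iff_isPositive P).mpr hP
  set S : H →L[ℂ] H := CFC.sqrt P with hSdef
  have hS0 : (0 : H →L[ℂ] H) ≤ S := CFC.sqrt_nonneg P
  have hSsa : ContinuousLinearMap.adjoint S = S :=
    isSelfAdjoint_iff'.mp ((nonneg_iff_isPositive S).mp hS0).isSelfAdjoint
  have hSS : S * S = P := CFC.sqrt_mul_sqrt_self P hP'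
  have happ : ∀ w : H, P w = S (S w) := by
    intro w; rw [← hSS]; rfl
  have key : ∀ w : H, (inner ℂ (P w) w : ℂ) = inner ℂ (S w) (S w) := by
    intro w
    rw [happ w]
    calc (inner ℂ (S (S w)) w : ℂ)
        = inner ℂ (ContinuousLinearMap.adjoint S (S w)) w := by rw [hSsa]
      _ = inner ℂ (S w) (S w) := adjoint_inner_left S w (S w)
  have key2 : (inner ℂ (P u) v : ℂ) = inner ℂ (S u) (S v) := by
    rw [happ u]
    calc (inner ℂ (S (S u)) v : ℂ)
        = inner ℂ (ContinuousLinearMap.adjoint S (S u)) v := by rw [hSsa]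
      _ = inner ℂ (S u) (S v) := adjoint_inner_left S v (S u)
  have hnu : Real.sqrt (re (inner ℂ (P u) u : ℂ)) = ‖S u‖ := by
    rw [key u, inner_self_eq_norm_sq, Real.sqrt_sq (norm_nonneg _)]
  have hnv : Real.sqrt (re (inner ℂ (P v) v : ℂ)) = ‖S v‖ := by
    rw [key v, inner_self_eq_norm_sq, Real.sqrt_sq (norm_nonneg _)]
  rw [key2, hnu, hnv]
  exact norm_inner_le_norm _ _

/-- A positive operator whose numerical range on the unit sphere is bounded by `M`
has norm at most `M`. -/
lemma pos_norm_le {A : H →L[ℂ] H} (hA : A.IsPositive) {M : ℝ} (hM : 0 ≤ M)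
    (h : ∀ u : H, ‖u‖ = 1 → re (inner ℂ (A u) u : ℂ) ≤ M) : ‖A‖ ≤ M := by
  have hscale : ∀ u : H, re (inner ℂ (A u) u : ℂ) ≤ M * ‖u‖ ^ 2 := by
    intro u
    rcases eq_or_ne u 0 with rfl | hu
    · simp
    · have hn : (0:ℝ) < ‖u‖ := norm_pos_iff.mpr hu
      set c : ℂ := ((‖u‖ : ℂ))⁻¹ with hc
      have h1 : ‖c • u‖ = 1 := by
        rw [norm_smul, hc, norm_inv, Complex.norm_real, Real.norm_of_nonneg hn.le]
        field_simp
      have h2 : re (inner ℂ (A (c • u)) (c • u) : ℂ) ≤ M := h _ h1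
      have hcc : (starRingEnd ℂ) c * c = (((‖u‖ ^ 2)⁻¹ : ℝ) : ℂ) := by
        rw [hc, map_inv₀, Complex.conj_ofReal]
        push_cast
        rw [← mul_inv]
        ring_nf
      rw [map_smul, inner_smul_left, inner_smul_right, ← mul_assoc, hcc] at h2
      have h2' : (‖u‖ ^ 2)⁻¹ * re (inner ℂ (A u) u : ℂ) ≤ M := by
        rw [← Complex.real_smul, RCLike.smul_re] at h2
        exact h2
      have hpos : (0:ℝ) < ‖u‖ ^ 2 := by positivity
      rw [inv_mul_le_iff₀ hpos] at h2'
      linarith [h2']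
  refine opNorm_le_bound A hM (fun u => ?_)
  rcases eq_or_ne (A u) 0 with h0 | h0
  · rw [h0, norm_zero]; positivity
  · have hAu : (0:ℝ) < ‖A u‖ := norm_pos_iff.mpr h0
    have hcs := pos_cs hA u (A u)
    have e2 : ‖(inner ℂ (A u) (A u) : ℂ)‖ = ‖A u‖ ^ 2 := by
      rw [inner_self_eq_norm_sq_to_K, norm_pow, RCLike.norm_ofReal,
        abs_of_nonneg (norm_nonneg _)]
    have hb1 : Real.sqrt (re (inner ℂ (A u) u : ℂ)) ≤ Real.sqrt (M * ‖u‖ ^ 2) :=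
      Real.sqrt_le_sqrt (hscale u)
    have hb2 : Real.sqrt (re (inner ℂ (A (A u)) (A u) : ℂ)) ≤ Real.sqrt (M * ‖A u‖ ^ 2) :=
      Real.sqrt_le_sqrt (hscale (A u))
    have key : ‖A u‖ ^ 2 ≤ Real.sqrt (M * ‖u‖ ^ 2) * Real.sqrt (M * ‖A u‖ ^ 2) :=
      calc ‖A u‖ ^ 2 = ‖(inner ℂ (A u) (A u) : ℂ)‖ := e2.symm
        _ ≤ _ := hcs.trans
            (mul_le_mul hb1 hb2 (Real.sqrt_nonneg _) (Real.sqrt_nonneg _))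
    have hs1 : Real.sqrt (M * ‖u‖ ^ 2) = Real.sqrt M * ‖u‖ := by
      rw [Real.sqrt_mul hM, Real.sqrt_sq (norm_nonneg _)]
    have hs2 : Real.sqrt (M * ‖A u‖ ^ 2) = Real.sqrt M * ‖A u‖ := by
      rw [Real.sqrt_mul hM, Real.sqrt_sq (norm_nonneg _)]
    rw [hs1, hs2] at key
    have hprod : Real.sqrt M * ‖u‖ * (Real.sqrt M * ‖A u‖) = M * ‖u‖ * ‖A u‖ :=
      calc Real.sqrt M * ‖u‖ * (Real.sqrt M * ‖A u‖)
          = Real.sqrt M * Real.sqrt M * (‖u‖ * ‖A u‖) := by ring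
        _ = M * ‖u‖ * ‖A u‖ := by rw [Real.mul_self_sqrt hM]; ring
    rw [hprod, pow_two] at key
    exact le_of_mul_le_mul_right key hAu

end Aux

open ContinuousLinearMap
theorem stmt13 {H : Type*} [NormedAddCommGroup H] [InnerProductSpace ℂ H] [CompleteSpace H]
    (B C : H →L[ℂ] H) (hB : B.IsPositive) (hC : C.IsPositive)
    (T : PiLp 2 (fun _ : Fin 2 => H) →L[ℂ] PiLp 2 (fun _ : Fin 2 => H))
    (hT : ∀ x : PiLp 2 (fun _ : Fin 2 => H), T x 0 = B (x 1) ∧ T x 1 = C (x 0)) :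
    numRad T = (1 / 2) * ‖B + C‖ := by
  unfold numRad
  set K := {r : ℝ | ∃ x : PiLp 2 (fun _ : Fin 2 => H), ‖x‖ = 1 ∧ r = ‖(inner ℂ (T x) x : ℂ)‖}
    with hK
  have hTx : ∀ x : PiLp 2 (fun _ : Fin 2 => H),
      (inner ℂ (T x) x : ℂ) = inner ℂ (B (x 1)) (x 0) + inner ℂ (C (x 0)) (x 1) := by
    intro x
    rw [PiLp.inner_apply, Fin.sum_univ_two, (hT x).1, (hT x).2]
  have hBdd : BddAbove K := by
    refine ⟨‖T‖, fun r hr => ?_⟩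
    obtain ⟨x, hx, rfl⟩ := hr
    calc ‖(inner ℂ (T x) x : ℂ)‖ ≤ ‖T x‖ * ‖x‖ := norm_inner_le_norm _ _
      _ ≤ ‖T‖ * ‖x‖ * ‖x‖ := by gcongr; exact T.le_opNorm x
      _ = ‖T‖ := by rw [hx]; ring
  have hub : ∀ r ∈ K, r ≤ 1 / 2 * ‖B + C‖ := by
    intro r hr
    obtain ⟨x, hx, rfl⟩ := hr
    have hx2 : ‖x 0‖ ^ 2 + ‖x 1‖ ^ 2 = 1 := by
      have h := PiLp.norm_sq_eq_of_L2 (fun _ : Fin 2 => H) x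
      rw [hx, Fin.sum_univ_two] at h
      linarith [h]
    set b0 := re (inner ℂ (B (x 0)) (x 0) : ℂ) with hb0d
    set b1 := re (inner ℂ (B (x 1)) (x 1) : ℂ) with hb1d
    set c0 := re (inner ℂ (C (x 0)) (x 0) : ℂ) with hc0d
    set c1 := re (inner ℂ (C (x 1)) (x 1) : ℂ) with hc1d
    have hb0 : 0 ≤ b0 := hB.re_inner_nonneg_left _
    have hb1 : 0 ≤ b1 := hB.re_inner_nonneg_left _
    have hc0 : 0 ≤ c0 := hC.re_inner_nonneg_left _
    have hc1 : 0 ≤ c1 := hC.re_inner_nonneg_left _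
    have h1 : ‖(inner ℂ (B (x 1)) (x 0) : ℂ)‖ ≤ Real.sqrt b1 * Real.sqrt b0 := pos_cs hB _ _
    have h2 : ‖(inner ℂ (C (x 0)) (x 1) : ℂ)‖ ≤ Real.sqrt c0 * Real.sqrt c1 := pos_cs hC _ _
    have am1 : Real.sqrt b1 * Real.sqrt b0 ≤ (b1 + b0) / 2 := by
      nlinarith [Real.sq_sqrt hb1, Real.sq_sqrt hb0,
        sq_nonneg (Real.sqrt b1 - Real.sqrt b0)]
    have am2 : Real.sqrt c0 * Real.sqrt c1 ≤ (c0 + c1) / 2 := by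
      nlinarith [Real.sq_sqrt hc0, Real.sq_sqrt hc1,
        sq_nonneg (Real.sqrt c0 - Real.sqrt c1)]
    have hsum : ∀ i : Fin 2, re (inner ℂ (B (x i)) (x i) : ℂ) + re (inner ℂ (C (x i)) (x i) : ℂ)
        ≤ ‖B + C‖ * ‖x i‖ ^ 2 := by
      intro i
      have he : re (inner ℂ (B (x i)) (x i) : ℂ) + re (inner ℂ (C (x i)) (x i) : ℂ)
          = re (inner ℂ ((B + C) (x i)) (x i) : ℂ) := by
        rw [ContinuousLinearMap.add_apply, inner_add_left, map_add]
      rw [he]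
      calc re (inner ℂ ((B + C) (x i)) (x i) : ℂ)
          ≤ ‖(inner ℂ ((B + C) (x i)) (x i) : ℂ)‖ := RCLike.re_le_norm _
        _ ≤ ‖(B + C) (x i)‖ * ‖x i‖ := norm_inner_le_norm _ _
        _ ≤ ‖B + C‖ * ‖x i‖ * ‖x i‖ := by gcongr; exact le_opNorm _ _
        _ = ‖B + C‖ * ‖x i‖ ^ 2 := by ring
    have hsum0 := hsum 0
    have hsum1 := hsum 1
    rw [← hb0d, ← hc0d] at hsum0
    rw [← hb1d, ← hc1d] at hsum1
    calc ‖(inner ℂ (T x) x : ℂ)‖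
        = ‖(inner ℂ (B (x 1)) (x 0) : ℂ) + (inner ℂ (C (x 0)) (x 1) : ℂ)‖ := by rw [hTx]
      _ ≤ ‖(inner ℂ (B (x 1)) (x 0) : ℂ)‖ + ‖(inner ℂ (C (x 0)) (x 1) : ℂ)‖ := norm_add_le _ _
      _ ≤ Real.sqrt b1 * Real.sqrt b0 + Real.sqrt c0 * Real.sqrt c1 := add_le_add h1 h2
      _ ≤ (b1 + b0) / 2 + (c0 + c1) / 2 := add_le_add am1 am2
      _ = ((b0 + c0) + (b1 + c1)) / 2 := by ring
      _ ≤ (‖B + C‖ * ‖x 0‖ ^ 2 + ‖B + C‖ * ‖x 1‖ ^ 2) / 2 := by linarith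
      _ = 1 / 2 * ‖B + C‖ := by
          rw [← mul_add, hx2]; ring
  rcases subsingleton_or_nontrivial H with hS | hN
  · haveI := hS
    haveI : Subsingleton (PiLp 2 (fun _ : Fin 2 => H)) :=
      ⟨fun a b => WithLp.ofLp_injective 2 (Subsingleton.elim _ _)⟩
    have hKempty : K = ∅ := by
      ext r
      simp only [hK, Set.mem_setOf_eq, Set.mem_empty_iff_false, iff_false, not_exists]
      rintro x ⟨hx, -⟩
      have hx0 : x = 0 := Subsingleton.elim _ _
      rw [hx0, norm_zero] at hx
      norm_num at hx
    have hBC : B + C = 0 := by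
      ext u
      exact Subsingleton.elim _ _
    rw [hKempty, Real.sSup_empty, hBC, norm_zero]
    ring
  · -- construct witnesses
    have hwit : ∀ u : H, ‖u‖ = 1 →
        ∃ r ∈ K, (1 / 2) * re (inner ℂ ((B + C) u) u : ℂ) ≤ r ∧ 0 ≤ r := by
      intro u hu
      set c : ℂ := ((Real.sqrt 2 : ℂ))⁻¹ with hc
      set x : PiLp 2 (fun _ : Fin 2 => H) := WithLp.toLp 2 (fun _ => c • u) with hxd
      have hnc : ‖c‖ = (Real.sqrt 2)⁻¹ := by
        rw [hc, norm_inv, Complex.norm_real, Real.norm_of_nonneg (Real.sqrt_nonneg 2)]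
      have hxi : ∀ i : Fin 2, x i = c • u := fun i => rfl
      have hxin : ∀ i : Fin 2, ‖x i‖ = (Real.sqrt 2)⁻¹ := by
        intro i
        rw [hxi i, norm_smul, hnc, hu, mul_one]
      have hx1 : ‖x‖ = 1 := by
        have hsq : ‖x‖ ^ 2 = 1 := by
          rw [PiLp.norm_sq_eq_of_L2, Fin.sum_univ_two, hxin 0, inv_pow,
            Real.sq_sqrt (by norm_num : (0:ℝ) ≤ 2)]
          norm_num
        calc ‖x‖ = Real.sqrt (‖x‖ ^ 2) := (Real.sqrt_sq (norm_nonneg x)).symm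
          _ = 1 := by rw [hsq, Real.sqrt_one]
      have hcc : (starRingEnd ℂ) c * c = (((2:ℝ)⁻¹ : ℝ) : ℂ) := by
        rw [hc, map_inv₀, Complex.conj_ofReal, ← mul_inv]
        norm_cast
        rw [Real.mul_self_sqrt (by norm_num)]
      have hval : (inner ℂ (T x) x : ℂ) = (((2:ℝ)⁻¹ : ℝ) : ℂ) * inner ℂ ((B + C) u) u := by
        rw [hTx x, hxi 0, map_smul, map_smul, inner_smul_left, inner_smul_left,
          inner_smul_right, inner_smul_right, ← mul_assoc, ← mul_assoc, hcc,
          ContinuousLinearMap.add_apply, inner_add_left, mul_add]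
      refine ⟨‖(inner ℂ (T x) x : ℂ)‖, ⟨x, hx1, rfl⟩, ?_, norm_nonneg _⟩
      have : re (inner ℂ (T x) x : ℂ) = (2:ℝ)⁻¹ * re (inner ℂ ((B + C) u) u : ℂ) := by
        rw [hval, ← Complex.real_smul, RCLike.smul_re]
      calc (1 / 2) * re (inner ℂ ((B + C) u) u : ℂ) = re (inner ℂ (T x) x : ℂ) := by
            rw [this]; ring
        _ ≤ ‖(inner ℂ (T x) x : ℂ)‖ := RCLike.re_le_norm _
    obtain ⟨v, hv⟩ := exists_ne (0 : H)
    have hvn : (0:ℝ) < ‖v‖ := norm_pos_iff.mpr hv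
    have hu0 : ‖((‖v‖ : ℂ))⁻¹ • v‖ = 1 := by
      rw [norm_smul, norm_inv, Complex.norm_real, Real.norm_of_nonneg hvn.le]
      field_simp
    obtain ⟨r0, hr0K, -, hr0⟩ := hwit _ hu0
    have hsSup0 : 0 ≤ sSup K := le_trans hr0 (le_csSup hBdd hr0K)
    have hlow : ‖B + C‖ ≤ 2 * sSup K := by
      refine pos_norm_le (hB.add hC) (by linarith) (fun u hu => ?_)
      obtain ⟨r, hrK, hr, -⟩ := hwit u hu
      have := le_csSup hBdd hrK
      linarith
    refine le_antisymm (Real.sSup_le hub (by positivity)) ?_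
    linarith
end

section
/- For bounded linear operators A, B, C, D on a complex Hilbert space H, w(AB ± CD) ≤ (1/4)(‖|A| + |B*|‖ · ‖|B| + |A*|‖ + ‖|C| + |D*|‖ · ‖|D| + |C*|‖). -/
set_option synthInstance.maxHeartbeats 1000000
set_option maxHeartbeats 1000000

open ContinuousLinearMap RCLike ComplexConjugate Polynomial

section auxiliary
variable {H : Type*} [NormedAddCommGroup H] [InnerProductSpace ℂ H] [CompleteSpace H]

lemma my_sw (T a b : H →L[ℂ] H) (ha : 0 ≤ a) (hb : 0 ≤ b) (hcom : T * a = b * T) :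
    T * cfc Real.sqrt a = cfc Real.sqrt b * T := by
  rcases subsingleton_or_nontrivial H with hH | hH
  · haveI : Subsingleton (H →L[ℂ] H) := ⟨fun f g => ContinuousLinearMap.ext fun x => Subsingleton.elim _ _⟩
    exact Subsingleton.elim _ _
  have hsa : ∀ t ∈ spectrum ℝ a, 0 ≤ t := fun t ht => spectrum_nonneg_of_nonneg ha ht
  have hsb : ∀ t ∈ spectrum ℝ b, 0 ≤ t := fun t ht => spectrum_nonneg_of_nonneg hb ht
  -- powers
  have hpow : ∀ n : ℕ, T * a ^ n = b ^ n * T := by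
    intro n; induction n with
    | zero => simp
    | succ n ih => rw [pow_succ, pow_succ, ← mul_assoc, ih, mul_assoc, hcom, ← mul_assoc]
  -- polynomials
  have hpol : ∀ p : ℝ[X], T * cfc (fun t => p.eval t) a = cfc (fun t => p.eval t) b * T := by
    intro p
    induction p using Polynomial.induction_on' with
    | add p q hp hq =>
      simp only [Polynomial.eval_add]
      rw [cfc_add a (fun t => p.eval t) (fun t => q.eval t) (by fun_prop) (by fun_prop),
        cfc_add b (fun t => p.eval t) (fun t => q.eval t) (by fun_prop) (by fun_prop),
        mul_add, add_mul, hp, hq]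
    | monomial n c =>
      simp only [Polynomial.eval_monomial]
      rw [cfc_const_mul c (fun t => t ^ n) a (by fun_prop),
        cfc_const_mul c (fun t => t ^ n) b (by fun_prop),
        cfc_pow_id a n, cfc_pow_id b n, mul_smul_comm, smul_mul_assoc, hpow n]
  -- approximation
  have key : ∀ ε : ℝ, 0 < ε → ‖T * cfc Real.sqrt a - cfc Real.sqrt b * T‖ ≤ 2 * ‖T‖ * ε := by
    intro ε hε
    set M : ℝ := max ‖a‖ ‖b‖ with hM
    set K : Set ℝ := Set.Icc 0 M with hK
    have hspa : spectrum ℝ a ⊆ K := by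
      intro t ht
      exact ⟨hsa t ht, le_trans (le_abs_self t) (le_trans (spectrum.norm_le_norm_of_mem ht) (le_max_left _ _))⟩
    have hspb : spectrum ℝ b ⊆ K := by
      intro t ht
      exact ⟨hsb t ht, le_trans (le_abs_self t) (le_trans (spectrum.norm_le_norm_of_mem ht) (le_max_right _ _))⟩
    -- get a polynomial close to sqrt on K
    obtain ⟨p, hp⟩ : ∃ p : ℝ[X], ∀ t ∈ K, |Real.sqrt t - p.eval t| ≤ ε := by
      have hcl := polynomialFunctions.topologicalClosure K
      set f₀ : C(K, ℝ) := ⟨fun t => Real.sqrt t, Real.continuous_sqrt.comp continuous_subtype_val⟩ with hf₀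
      have hmem : f₀ ∈ (polynomialFunctions K).topologicalClosure := by rw [hcl]; trivial
      have hmem' : f₀ ∈ closure ((polynomialFunctions K) : Set C(K, ℝ)) := hmem
      rw [Metric.mem_closure_iff] at hmem'
      obtain ⟨g, hg, hdist⟩ := hmem' ε hε
      rw [polynomialFunctions_coe] at hg
      obtain ⟨p, rfl⟩ := hg
      refine ⟨p, fun t ht => ?_⟩
      have := ContinuousMap.dist_apply_le_dist (f := f₀) (g := (Polynomial.toContinuousMapOnAlgHom K) p) ⟨t, ht⟩
      rw [Real.dist_eq] at this
      have h2 : ((Polynomial.toContinuousMapOnAlgHom K) p) ⟨t, ht⟩ = p.eval t := rfl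
      have h3 : f₀ ⟨t, ht⟩ = Real.sqrt t := rfl
      rw [h2, h3] at this
      exact le_trans this (le_of_lt hdist)
    have hna : ‖cfc Real.sqrt a - cfc (fun t => p.eval t) a‖ ≤ ε := by
      rw [← cfc_sub (a := a) (f := Real.sqrt) (g := fun t => p.eval t) (by fun_prop) (by fun_prop)]
      exact norm_cfc_le hε.le (fun t ht => by
        rw [Real.norm_eq_abs]; exact hp t (hspa ht))
    have hnb : ‖cfc Real.sqrt b - cfc (fun t => p.eval t) b‖ ≤ ε := by
      rw [← cfc_sub (a := b) (f := Real.sqrt) (g := fun t => p.eval t) (by fun_prop) (by fun_prop)]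
      exact norm_cfc_le hε.le (fun t ht => by
        rw [Real.norm_eq_abs]; exact hp t (hspb ht))
    have hsplit : T * cfc Real.sqrt a - cfc Real.sqrt b * T
        = T * (cfc Real.sqrt a - cfc (fun t => p.eval t) a)
          - (cfc Real.sqrt b - cfc (fun t => p.eval t) b) * T := by
      rw [mul_sub, sub_mul, hpol p]; abel
    rw [hsplit]
    calc ‖T * (cfc Real.sqrt a - cfc (fun t => p.eval t) a)
          - (cfc Real.sqrt b - cfc (fun t => p.eval t) b) * T‖
        ≤ ‖T * (cfc Real.sqrt a - cfc (fun t => p.eval t) a)‖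
          + ‖(cfc Real.sqrt b - cfc (fun t => p.eval t) b) * T‖ := norm_sub_le _ _
      _ ≤ ‖T‖ * ε + ε * ‖T‖ := by
          refine add_le_add ?_ ?_
          · exact le_trans (norm_mul_le _ _) (mul_le_mul_of_nonneg_left hna (norm_nonneg T))
          · exact le_trans (norm_mul_le _ _) (mul_le_mul_of_nonneg_right hnb (norm_nonneg T))
      _ = 2 * ‖T‖ * ε := by ring
  have hz : ‖T * cfc Real.sqrt a - cfc Real.sqrt b * T‖ ≤ 0 := by
    refine le_of_forall_pos_le_add fun ε hε => ?_
    have := key (ε / (2 * ‖T‖ + 1)) (by positivity)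
    refine le_trans this ?_
    rw [zero_add]
    rw [div_eq_inv_mul, ← mul_assoc]
    have h1 : 2 * ‖T‖ * (2 * ‖T‖ + 1)⁻¹ ≤ 1 := by
      rw [mul_inv_le_iff₀ (by positivity), one_mul]; linarith [norm_nonneg T]
    nlinarith [norm_nonneg T, hε.le]
  have := le_antisymm hz (norm_nonneg _)
  rwa [norm_eq_zero, sub_eq_zero] at this


lemma my_hre {P Q : H →L[ℂ] H} (h : P ≤ Q) (x : H) :
    re (inner ℂ (P x) x : ℂ) ≤ re (inner ℂ (Q x) x : ℂ) := by
  have h0 := ((ContinuousLinearMap.le_def P Q).mp h).inner_nonneg_left x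
  rw [ContinuousLinearMap.sub_apply, inner_sub_left] at h0
  have h1 := (Complex.le_def.mp h0).1
  rw [Complex.zero_re, Complex.sub_re] at h1
  exact sub_nonneg.mp h1

lemma my_re_nonneg {P : H →L[ℂ] H} (h : 0 ≤ P) (x : H) :
    0 ≤ re (inner ℂ (P x) x : ℂ) :=
  (Complex.le_def.mp (((ContinuousLinearMap.nonneg_iff_isPositive P).mp h).inner_nonneg_left x)).1

lemma my_re_algebraMap (c : ℝ) (x : H) :
    re (inner ℂ ((algebraMap ℝ (H →L[ℂ] H) c) x) x : ℂ) = c * ‖x‖ ^ 2 := by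
  rw [Algebra.algebraMap_eq_smul_one, ← algebraMap_smul ℂ c (1 : (H →L[ℂ] H)), coe_smul',
    Pi.smul_apply, ContinuousLinearMap.one_apply, inner_smul_left, RCLike.algebraMap_eq_ofReal, conj_ofReal,
    re_ofReal_mul, inner_self_eq_norm_sq]

lemma my_msd (T : H →L[ℂ] H) (x y : H) (δ : ℝ) (hδ : 0 < δ) :
    ‖(inner ℂ (T x) y : ℂ)‖ ^ 2 ≤
      re (inner ℂ ((cfc Real.sqrt (star T * T) : H →L[ℂ] H) x) x : ℂ) *
      (re (inner ℂ ((cfc Real.sqrt (T * star T) : H →L[ℂ] H) y) y : ℂ) + δ * ‖y‖ ^ 2) := by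
  set a : H →L[ℂ] H := star T * T with ha_def
  set b : H →L[ℂ] H := T * star T with hb_def
  have ha : 0 ≤ a := star_mul_self_nonneg T
  have hb : 0 ≤ b := mul_star_self_nonneg T
  have hsa : ∀ t ∈ spectrum ℝ a, 0 ≤ t := fun t ht => spectrum_nonneg_of_nonneg ha ht
  set R : H →L[ℂ] H := cfc Real.sqrt a with hR_def
  set S : H →L[ℂ] H := cfc Real.sqrt b with hS_def
  have hR : 0 ≤ R := cfc_nonneg (fun t _ => Real.sqrt_nonneg t)
  have hS : 0 ≤ S := cfc_nonneg (fun t _ => Real.sqrt_nonneg t)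
  have hRsa : IsSelfAdjoint R := hR.isSelfAdjoint
  have hSsa : IsSelfAdjoint S := hS.isSelfAdjoint
  have hsR : ∀ t ∈ spectrum ℝ R, 0 ≤ t := fun t ht => spectrum_nonneg_of_nonneg hR ht
  have hsS : ∀ t ∈ spectrum ℝ S, 0 ≤ t := fun t ht => spectrum_nonneg_of_nonneg hS ht
  have hRR : R * R = a := by
    rw [hR_def, ← cfc_mul Real.sqrt Real.sqrt a (by fun_prop) (by fun_prop),
      cfc_congr (g := fun t : ℝ => t) (fun t ht => Real.mul_self_sqrt (hsa t ht))]
    exact cfc_id' ℝ a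
  -- functions
  set fC : ℝ → ℝ := fun t => (Real.sqrt (t + δ))⁻¹ with hfC
  set fD : ℝ → ℝ := fun t => Real.sqrt (t + δ) with hfD
  set fE : ℝ → ℝ := fun t => (t + δ)⁻¹ with hfE
  have hcont_add : Continuous (fun t : ℝ => t + δ) := by fun_prop
  have hcD : Continuous fD := Real.continuous_sqrt.comp hcont_add
  have hcC : ContinuousOn fC (spectrum ℝ S) :=
    (hcD.continuousOn).inv₀ (fun t ht => ne_of_gt (Real.sqrt_pos.mpr (by linarith [hsS t ht])))
  have hcES : ContinuousOn fE (spectrum ℝ S) :=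
    (hcont_add.continuousOn).inv₀ (fun t ht => by have := hsS t ht; positivity)
  have hcER : ContinuousOn fE (spectrum ℝ R) :=
    (hcont_add.continuousOn).inv₀ (fun t ht => by have := hsR t ht; positivity)
  set C : H →L[ℂ] H := cfc fC S with hC_def
  set D : H →L[ℂ] H := cfc fD S with hD_def
  set E : H →L[ℂ] H := cfc fE S with hE_def
  set E' : H →L[ℂ] H := cfc fE R with hE'_def
  have hC0 : 0 ≤ C := cfc_nonneg (fun t _ => by positivity)
  have hD0 : 0 ≤ D := cfc_nonneg (fun t _ => Real.sqrt_nonneg _)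
  have hCsa : IsSelfAdjoint C := hC0.isSelfAdjoint
  have hDsa : IsSelfAdjoint D := hD0.isSelfAdjoint
  have hCadj : adjoint C = C := by rw [← star_eq_adjoint]; exact hCsa
  have hDadj : adjoint D = D := by rw [← star_eq_adjoint]; exact hDsa
  have hTadj : adjoint T = star T := (star_eq_adjoint T).symm
  -- C * D = 1
  have hCD : C * D = 1 := by
    rw [hC_def, hD_def, ← cfc_mul fC fD S hcC hcD.continuousOn,
      cfc_congr (g := fun _ : ℝ => (1 : ℝ)) (fun t ht =>
        inv_mul_cancel₀ (ne_of_gt (Real.sqrt_pos.mpr (by linarith [hsS t ht]))))]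
    exact cfc_const_one ℝ S
  -- C * C = E
  have hCC : C * C = E := by
    rw [hC_def, hE_def, ← cfc_mul fC fC S hcC hcC]
    refine cfc_congr (fun t ht => ?_)
    have h1 : 0 < t + δ := by linarith [hsS t ht]
    rw [hfC, hfE]
    simp only
    rw [← mul_inv, Real.mul_self_sqrt h1.le]
  -- D * D = S + δ
  set c1 : H →L[ℂ] H := algebraMap ℝ (H →L[ℂ] H) δ with hc1
  have hDD : D * D = S + c1 := by
    rw [hD_def, ← cfc_mul fD fD S hcD.continuousOn hcD.continuousOn,
      cfc_congr (g := fun t : ℝ => t + δ) (fun t ht =>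
        Real.mul_self_sqrt (by linarith [hsS t ht]))]
    rw [cfc_add_const δ (fun t : ℝ => t) S (by fun_prop), cfc_id' ℝ S]
  -- E inverses
  have hScfc : S + c1 = cfc (fun t : ℝ => t + δ) S := by
    rw [cfc_add_const δ (fun t : ℝ => t) S (by fun_prop), cfc_id' ℝ S]
  have hRcfc : R + c1 = cfc (fun t : ℝ => t + δ) R := by
    rw [cfc_add_const δ (fun t : ℝ => t) R (by fun_prop), cfc_id' ℝ R]
  have hES : E * (S + c1) = 1 := by
    rw [hScfc, hE_def, ← cfc_mul fE (fun t => t + δ) S hcES hcont_add.continuousOn,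
      cfc_congr (g := fun _ : ℝ => (1 : ℝ)) (fun t ht =>
        inv_mul_cancel₀ (by have := hsS t ht; positivity))]
    exact cfc_const_one ℝ S
  have hRE' : (R + c1) * E' = 1 := by
    rw [hRcfc, hE'_def, ← cfc_mul (fun t => t + δ) fE R hcont_add.continuousOn hcER,
      cfc_congr (g := fun _ : ℝ => (1 : ℝ)) (fun t ht =>
        mul_inv_cancel₀ (by have := hsR t ht; positivity))]
    exact cfc_const_one ℝ R
  -- intertwining
  have hTS : T * R = S * T := my_sw T a b ha hb (by rw [ha_def, hb_def, mul_assoc])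
  have hres : (S + c1) * T = T * (R + c1) := by
    rw [add_mul, mul_add, ← hTS, hc1]
    congr 1
    exact Algebra.commutes δ T
  have h9 : (S + c1) * (T * E') = T := by
    rw [← mul_assoc, hres, mul_assoc, hRE', mul_one]
  have hET : E * T = T * E' := by
    calc E * T = E * ((S + c1) * (T * E')) := by rw [h9]
      _ = (E * (S + c1)) * (T * E') := by rw [mul_assoc]
      _ = T * E' := by rw [hES, one_mul]
  -- the operator inequality
  have hop : star T * (E * T) ≤ R := by
    rw [hET, ← mul_assoc, ← ha_def, ← hRR, hE'_def]
    have h1 : R * R * cfc fE R = cfc (fun t => t * t * fE t) R := by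
      rw [cfc_mul (fun t => t * t) fE R (by fun_prop) hcER,
        cfc_mul (fun t : ℝ => t) (fun t : ℝ => t) R (by fun_prop) (by fun_prop), cfc_id' ℝ R]
    rw [h1]
    calc cfc (fun t => t * t * fE t) R ≤ cfc (fun t : ℝ => t) R := by
          refine cfc_mono (fun t ht => ?_)
          have h2 : 0 ≤ t := hsR t ht
          have h3 : 0 < t + δ := by linarith
          rw [hfE]
          simp only
          rw [mul_inv_le_iff₀ h3]
          nlinarith
      _ = R := cfc_id' ℝ R
  -- inner product computations
  have hsplit : (inner ℂ (T x) y : ℂ) = inner ℂ (C (T x)) (D y) := by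
    conv_lhs => rw [show y = C (D y) by rw [← ContinuousLinearMap.mul_apply, hCD, ContinuousLinearMap.one_apply]]
    rw [← hCadj, adjoint_inner_right, hCadj]
  have h1 : ‖(inner ℂ (T x) y : ℂ)‖ ≤ ‖C (T x)‖ * ‖D y‖ := by
    rw [hsplit]; exact norm_inner_le_norm _ _
  have h2 : ‖C (T x)‖ ^ 2 ≤ re (inner ℂ (R x) x : ℂ) := by
    have e1 : (inner ℂ ((star T * (E * T)) x) x : ℂ) = inner ℂ (C (T x)) (C (T x)) := by
      rw [ContinuousLinearMap.mul_apply, ← hTadj, adjoint_inner_left,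
        ContinuousLinearMap.mul_apply, ← hCC, ContinuousLinearMap.mul_apply,
        ← hCadj, adjoint_inner_left, hCadj]
    have e2 : re (inner ℂ (C (T x)) (C (T x)) : ℂ) = ‖C (T x)‖ ^ 2 :=
      inner_self_eq_norm_sq _
    rw [← e2, ← e1]
    exact my_hre hop x
  have h3 : ‖D y‖ ^ 2 = re (inner ℂ (S y) y : ℂ) + δ * ‖y‖ ^ 2 := by
    have e1 : (inner ℂ ((D * D) y) y : ℂ) = inner ℂ (D y) (D y) := by
      rw [ContinuousLinearMap.mul_apply, ← hDadj, adjoint_inner_left, hDadj]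
    have e2 : re (inner ℂ (D y) (D y) : ℂ) = ‖D y‖ ^ 2 := inner_self_eq_norm_sq _
    rw [← e2, ← e1, hDD, ContinuousLinearMap.add_apply, inner_add_left, map_add,
      my_re_algebraMap δ y]
  calc ‖(inner ℂ (T x) y : ℂ)‖ ^ 2 ≤ (‖C (T x)‖ * ‖D y‖) ^ 2 := by
        refine pow_le_pow_left₀ (norm_nonneg _) h1 2
    _ = ‖C (T x)‖ ^ 2 * ‖D y‖ ^ 2 := by ring
    _ ≤ re (inner ℂ (R x) x : ℂ) * (re (inner ℂ (S y) y : ℂ) + δ * ‖y‖ ^ 2) := by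
        rw [h3]
        refine mul_le_mul_of_nonneg_right h2 ?_
        rw [← h3]; positivity


-- δ-free mixed Schwarz
lemma my_ms (T : H →L[ℂ] H) (x y : H) :
    ‖(inner ℂ (T x) y : ℂ)‖ ^ 2 ≤
      re (inner ℂ ((cfc Real.sqrt (star T * T) : H →L[ℂ] H) x) x : ℂ) *
      re (inner ℂ ((cfc Real.sqrt (T * star T) : H →L[ℂ] H) y) y : ℂ) := by
  set P := re (inner ℂ ((cfc Real.sqrt (star T * T) : H →L[ℂ] H) x) x : ℂ) with hP
  set Q := re (inner ℂ ((cfc Real.sqrt (T * star T) : H →L[ℂ] H) y) y : ℂ) with hQ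
  have hP0 : 0 ≤ P := my_re_nonneg (cfc_nonneg (fun t _ => Real.sqrt_nonneg t)) x
  refine le_of_forall_pos_le_add fun ε hε => ?_
  have hδ : 0 < ε / (P * ‖y‖ ^ 2 + 1) := by positivity
  refine le_trans (my_msd T x y _ hδ) ?_
  have h1 : P * (ε / (P * ‖y‖ ^ 2 + 1) * ‖y‖ ^ 2) ≤ ε := by
    rw [div_mul_eq_mul_div, mul_div_assoc']
    rw [div_le_iff₀ (by positivity)]
    nlinarith [sq_nonneg (‖y‖), hε.le]
  nlinarith [hP0]

-- arithmetic lemma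
lemma my_sqrtCS {p q r s : ℝ} (hp : 0 ≤ p) (hq : 0 ≤ q) (hr : 0 ≤ r) (hs : 0 ≤ s) :
    Real.sqrt (p * q) + Real.sqrt (r * s) ≤ Real.sqrt ((p + r) * (q + s)) := by
  rw [Real.sqrt_mul hp, Real.sqrt_mul hr, Real.sqrt_mul (by linarith)]
  have e := Real.sq_sqrt hp
  have e2 := Real.sq_sqrt hq
  have e3 := Real.sq_sqrt hr
  have e4 := Real.sq_sqrt hs
  have e5 := Real.sq_sqrt (show (0:ℝ) ≤ p + r by linarith)
  have e6 := Real.sq_sqrt (show (0:ℝ) ≤ q + s by linarith)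
  have key2 : (Real.sqrt p * Real.sqrt q + Real.sqrt r * Real.sqrt s) ^ 2
      ≤ (Real.sqrt (p + r) * Real.sqrt (q + s)) ^ 2 := by
    rw [mul_pow, e5, e6]
    nlinarith [sq_nonneg (Real.sqrt p * Real.sqrt s - Real.sqrt r * Real.sqrt q),
      e, e2, e3, e4, Real.sqrt_nonneg p, Real.sqrt_nonneg q, Real.sqrt_nonneg r,
      Real.sqrt_nonneg s, mul_nonneg (Real.sqrt_nonneg p) (Real.sqrt_nonneg q),
      mul_nonneg (Real.sqrt_nonneg r) (Real.sqrt_nonneg s)]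
  nlinarith [key2, add_nonneg (mul_nonneg (Real.sqrt_nonneg p) (Real.sqrt_nonneg q))
      (mul_nonneg (Real.sqrt_nonneg r) (Real.sqrt_nonneg s)),
    mul_nonneg (Real.sqrt_nonneg (p+r)) (Real.sqrt_nonneg (q+s))]

-- Kittaneh norm inequality
lemma my_norm_add (X Y : H →L[ℂ] H) :
    ‖X + Y‖ ≤ Real.sqrt (‖(cfc Real.sqrt (star X * X) : H →L[ℂ] H) + cfc Real.sqrt (star Y * Y)‖
      * ‖(cfc Real.sqrt (X * star X) : H →L[ℂ] H) + cfc Real.sqrt (Y * star Y)‖) := by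
  set N1 := ‖(cfc Real.sqrt (star X * X) : H →L[ℂ] H) + cfc Real.sqrt (star Y * Y)‖ with hN1
  set N2 := ‖(cfc Real.sqrt (X * star X) : H →L[ℂ] H) + cfc Real.sqrt (Y * star Y)‖ with hN2
  refine opNorm_le_bound _ (Real.sqrt_nonneg _) fun x => ?_
  set v := (X + Y) x with hv
  have key : ‖v‖ ^ 2 ≤ Real.sqrt (N1 * N2) * (‖x‖ * ‖v‖) := by
    have h0 : (‖v‖ : ℝ) ^ 2 = re (inner ℂ v v : ℂ) := (inner_self_eq_norm_sq _).symm
    have h1 : (inner ℂ v v : ℂ) = inner ℂ (X x) v + inner ℂ (Y x) v := by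
      rw [hv, ContinuousLinearMap.add_apply]
      conv_lhs => rw [inner_add_left]
    set pX := re (inner ℂ ((cfc Real.sqrt (star X * X) : H →L[ℂ] H) x) x : ℂ) with hpX
    set pY := re (inner ℂ ((cfc Real.sqrt (star Y * Y) : H →L[ℂ] H) x) x : ℂ) with hpY
    set qX := re (inner ℂ ((cfc Real.sqrt (X * star X) : H →L[ℂ] H) v) v : ℂ) with hqX
    set qY := re (inner ℂ ((cfc Real.sqrt (Y * star Y) : H →L[ℂ] H) v) v : ℂ) with hqY
    have hpX0 : 0 ≤ pX := my_re_nonneg (cfc_nonneg (fun t _ => Real.sqrt_nonneg t)) x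
    have hpY0 : 0 ≤ pY := my_re_nonneg (cfc_nonneg (fun t _ => Real.sqrt_nonneg t)) x
    have hqX0 : 0 ≤ qX := my_re_nonneg (cfc_nonneg (fun t _ => Real.sqrt_nonneg t)) v
    have hqY0 : 0 ≤ qY := my_re_nonneg (cfc_nonneg (fun t _ => Real.sqrt_nonneg t)) v
    have hX : ‖(inner ℂ (X x) v : ℂ)‖ ≤ Real.sqrt (pX * qX) := by
      refine (Real.le_sqrt (norm_nonneg _) (by positivity)).mpr (my_ms X x v)
    have hY : ‖(inner ℂ (Y x) v : ℂ)‖ ≤ Real.sqrt (pY * qY) := by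
      refine (Real.le_sqrt (norm_nonneg _) (by positivity)).mpr (my_ms Y x v)
    have h2 : ‖v‖ ^ 2 ≤ Real.sqrt ((pX + pY) * (qX + qY)) := by
      rw [h0, h1]
      calc re ((inner ℂ (X x) v : ℂ) + inner ℂ (Y x) v)
          ≤ ‖(inner ℂ (X x) v : ℂ) + inner ℂ (Y x) v‖ := re_le_norm _
        _ ≤ ‖(inner ℂ (X x) v : ℂ)‖ + ‖(inner ℂ (Y x) v : ℂ)‖ := norm_add_le _ _
        _ ≤ Real.sqrt (pX * qX) + Real.sqrt (pY * qY) := add_le_add hX hY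
        _ ≤ Real.sqrt ((pX + pY) * (qX + qY)) := my_sqrtCS hpX0 hqX0 hpY0 hqY0
    -- bound the sums by the norms
    have hsum1 : pX + pY ≤ N1 * ‖x‖ ^ 2 := by
      have : (inner ℂ (((cfc Real.sqrt (star X * X) : H →L[ℂ] H) + cfc Real.sqrt (star Y * Y)) x) x : ℂ)
          = inner ℂ ((cfc Real.sqrt (star X * X) : H →L[ℂ] H) x) x
            + inner ℂ ((cfc Real.sqrt (star Y * Y) : H →L[ℂ] H) x) x := by
        rw [ContinuousLinearMap.add_apply, inner_add_left]
      calc pX + pY = re (inner ℂ (((cfc Real.sqrt (star X * X) : H →L[ℂ] H)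
            + cfc Real.sqrt (star Y * Y)) x) x : ℂ) := by rw [this, map_add]
        _ ≤ ‖(inner ℂ (((cfc Real.sqrt (star X * X) : H →L[ℂ] H)
            + cfc Real.sqrt (star Y * Y)) x) x : ℂ)‖ := re_le_norm _
        _ ≤ ‖((cfc Real.sqrt (star X * X) : H →L[ℂ] H) + cfc Real.sqrt (star Y * Y)) x‖ * ‖x‖ :=
            norm_inner_le_norm _ _
        _ ≤ N1 * ‖x‖ * ‖x‖ := by
            refine mul_le_mul_of_nonneg_right ?_ (norm_nonneg _)
            exact le_opNorm _ _
        _ = N1 * ‖x‖ ^ 2 := by ring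
    have hsum2 : qX + qY ≤ N2 * ‖v‖ ^ 2 := by
      have : (inner ℂ (((cfc Real.sqrt (X * star X) : H →L[ℂ] H) + cfc Real.sqrt (Y * star Y)) v) v : ℂ)
          = inner ℂ ((cfc Real.sqrt (X * star X) : H →L[ℂ] H) v) v
            + inner ℂ ((cfc Real.sqrt (Y * star Y) : H →L[ℂ] H) v) v := by
        rw [ContinuousLinearMap.add_apply, inner_add_left]
      calc qX + qY = re (inner ℂ (((cfc Real.sqrt (X * star X) : H →L[ℂ] H)
            + cfc Real.sqrt (Y * star Y)) v) v : ℂ) := by rw [this, map_add]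
        _ ≤ ‖(inner ℂ (((cfc Real.sqrt (X * star X) : H →L[ℂ] H)
            + cfc Real.sqrt (Y * star Y)) v) v : ℂ)‖ := re_le_norm _
        _ ≤ ‖((cfc Real.sqrt (X * star X) : H →L[ℂ] H) + cfc Real.sqrt (Y * star Y)) v‖ * ‖v‖ :=
            norm_inner_le_norm _ _
        _ ≤ N2 * ‖v‖ * ‖v‖ := by
            refine mul_le_mul_of_nonneg_right ?_ (norm_nonneg _)
            exact le_opNorm _ _
        _ = N2 * ‖v‖ ^ 2 := by ring
    have hN10 : 0 ≤ N1 := norm_nonneg _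
    have hN20 : 0 ≤ N2 := norm_nonneg _
    calc ‖v‖ ^ 2 ≤ Real.sqrt ((pX + pY) * (qX + qY)) := h2
      _ ≤ Real.sqrt ((N1 * ‖x‖ ^ 2) * (N2 * ‖v‖ ^ 2)) := by
          refine Real.sqrt_le_sqrt ?_
          refine mul_le_mul hsum1 hsum2 (by linarith) (by positivity)
      _ = Real.sqrt (N1 * N2) * (‖x‖ * ‖v‖) := by
          rw [show (N1 * ‖x‖ ^ 2) * (N2 * ‖v‖ ^ 2) = (N1 * N2) * (‖x‖ * ‖v‖) ^ 2 by ring,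
            Real.sqrt_mul (by positivity), Real.sqrt_sq (by positivity)]
  -- conclude
  rcases eq_or_lt_of_le (norm_nonneg v) with hv0 | hv0
  · rw [← hv0]; positivity
  · have := key
    nlinarith [Real.sqrt_nonneg (N1 * N2), norm_nonneg x]

lemma my_absOp (T : H →L[ℂ] H) : absOp T = cfc Real.sqrt (star T * T) := by
  have hsa : ∀ t ∈ spectrum ℝ (star T * T), 0 ≤ t :=
    fun t ht => spectrum_nonneg_of_nonneg (star_mul_self_nonneg T) ht
  have h3 : 0 ≤ cfc Real.sqrt (star T * T) := cfc_nonneg (fun t _ => Real.sqrt_nonneg t)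
  have h4 : cfc Real.sqrt (star T * T) * cfc Real.sqrt (star T * T) = star T * T := by
    rw [← cfc_mul Real.sqrt Real.sqrt _ (by fun_prop) (by fun_prop),
      cfc_congr (g := fun t : ℝ => t) (fun t ht => Real.mul_self_sqrt (hsa t ht))]
    exact cfc_id' ℝ _
  rw [absOp, ← star_eq_adjoint]
  exact CFC.sqrt_unique h4 h3

lemma my_w (A B : H →L[ℂ] H) (x : H) :
    4 * ‖(inner ℂ ((A * B) x) x : ℂ)‖ ≤
      (‖absOp A + absOp (adjoint B)‖ * ‖absOp B + absOp (adjoint A)‖) * ‖x‖ ^ 2 := by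
  set z : ℂ := inner ℂ ((A * B) x) x with hz_def
  by_cases hz : z = 0
  · rw [hz]
    simp only [norm_zero, mul_zero]
    positivity
  set lam : ℂ := (‖z‖ : ℂ) / z with hlam_def
  have hlam : ‖lam‖ = 1 := by
    rw [hlam_def, norm_div, Complex.norm_real, norm_norm,
      div_self (norm_ne_zero_iff.mpr hz)]
  have hlamz : lam * z = (‖z‖ : ℂ) := div_mul_cancel₀ _ hz
  have hconj : conj lam * lam = 1 := by
    have h1 : Complex.normSq lam = 1 := by
      rw [Complex.normSq_eq_norm_sq, hlam]; norm_num
    rw [← Complex.normSq_eq_conj_mul_self, h1, Complex.ofReal_one]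
  set X : H →L[ℂ] H := lam • adjoint A with hX_def
  -- identify the four absolute values
  have hstarX : star X = conj lam • A := by
    rw [hX_def, star_smul, star_eq_adjoint, adjoint_adjoint]
    rfl
  have hXX : star X * X = A * adjoint A := by
    rw [hstarX, hX_def, smul_mul_assoc, mul_smul_comm, smul_smul, hconj, one_smul]
  have hXX' : X * star X = adjoint A * A := by
    rw [hstarX, hX_def, smul_mul_assoc, mul_smul_comm, smul_smul, mul_comm lam _, hconj, one_smul]
  -- key inner product identity
  have hre : re (inner ℂ (X x) (B x) : ℂ) = ‖z‖ := by
    rw [hX_def, coe_smul', Pi.smul_apply, inner_smul_left, adjoint_inner_left,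
      ← ContinuousLinearMap.mul_apply]
    have h6 : (inner ℂ x ((A * B) x) : ℂ) = conj z := by
      rw [hz_def, ← inner_conj_symm]
    rw [h6, ← map_mul, hlamz, Complex.conj_ofReal]
    simp
  -- the norm identity
  have hkey : 4 * ‖z‖ = ‖X x + B x‖ ^ 2 - ‖X x - B x‖ ^ 2 := by
    rw [norm_add_sq (𝕜 := ℂ), norm_sub_sq (𝕜 := ℂ), hre]
    ring
  set N1 : ℝ := ‖absOp A + absOp (adjoint B)‖ with hN1
  set N2 : ℝ := ‖absOp B + absOp (adjoint A)‖ with hN2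
  have hnorm : ‖X + B‖ ≤ Real.sqrt (N2 * N1) := by
    have h7 := my_norm_add X B
    rw [hXX, hXX'] at h7
    have e1 : (cfc Real.sqrt (A * adjoint A) : H →L[ℂ] H) = absOp (adjoint A) := by
      rw [my_absOp, star_eq_adjoint, adjoint_adjoint]
    have e2 : (cfc Real.sqrt (adjoint A * A) : H →L[ℂ] H) = absOp A := by
      rw [my_absOp, star_eq_adjoint]
    have e3 : (cfc Real.sqrt (star B * B) : H →L[ℂ] H) = absOp B := by
      rw [my_absOp]
    have e4 : (cfc Real.sqrt (B * star B) : H →L[ℂ] H) = absOp (adjoint B) := by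
      rw [my_absOp, star_eq_adjoint (adjoint B), adjoint_adjoint, star_eq_adjoint B]
    rw [e1, e2, e3, e4] at h7
    rw [add_comm (absOp (adjoint A)) (absOp B), ← hN1, ← hN2] at h7
    exact h7
  have hfin : ‖X x + B x‖ ^ 2 ≤ N2 * N1 * ‖x‖ ^ 2 := by
    have h8 : ‖X x + B x‖ = ‖(X + B) x‖ := by rw [ContinuousLinearMap.add_apply]
    rw [h8]
    calc ‖(X + B) x‖ ^ 2 ≤ (‖X + B‖ * ‖x‖) ^ 2 := by
          refine pow_le_pow_left₀ (norm_nonneg _) (le_opNorm _ _) 2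
      _ ≤ (Real.sqrt (N2 * N1) * ‖x‖) ^ 2 := by
          refine pow_le_pow_left₀ (by positivity) ?_ 2
          exact mul_le_mul_of_nonneg_right hnorm (norm_nonneg _)
      _ = N2 * N1 * ‖x‖ ^ 2 := by
          rw [mul_pow, Real.sq_sqrt (by positivity)]
  calc 4 * ‖z‖ = ‖X x + B x‖ ^ 2 - ‖X x - B x‖ ^ 2 := hkey
    _ ≤ ‖X x + B x‖ ^ 2 := by nlinarith [sq_nonneg (‖X x - B x‖)]
    _ ≤ N2 * N1 * ‖x‖ ^ 2 := hfin
    _ = N1 * N2 * ‖x‖ ^ 2 := by ring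

omit [CompleteSpace H] in
lemma my_numRad_le (T : H →L[ℂ] H) (c : ℝ) (hc : 0 ≤ c)
    (h : ∀ x : H, ‖x‖ = 1 → ‖(inner ℂ (T x) x : ℂ)‖ ≤ c) : numRad T ≤ c := by
  refine Real.sSup_le ?_ hc
  rintro r ⟨x, hx, rfl⟩
  exact h x hx



end auxiliary

open ContinuousLinearMap in
theorem stmt15 {H : Type*} [NormedAddCommGroup H] [InnerProductSpace ℂ H] [CompleteSpace H]
    (A B C D : H →L[ℂ] H) :
    numRad (A * B + C * D) ≤ (1 / 4) *
      (‖absOp A + absOp (adjoint B)‖ * ‖absOp B + absOp (adjoint A)‖ +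
       ‖absOp C + absOp (adjoint D)‖ * ‖absOp D + absOp (adjoint C)‖) ∧
    numRad (A * B - C * D) ≤ (1 / 4) *
      (‖absOp A + absOp (adjoint B)‖ * ‖absOp B + absOp (adjoint A)‖ +
       ‖absOp C + absOp (adjoint D)‖ * ‖absOp D + absOp (adjoint C)‖) := by
  set N1 : ℝ := ‖absOp A + absOp (adjoint B)‖ * ‖absOp B + absOp (adjoint A)‖ with hN1
  set N2 : ℝ := ‖absOp C + absOp (adjoint D)‖ * ‖absOp D + absOp (adjoint C)‖ with hN2
  have hN10 : 0 ≤ N1 := by positivity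
  have hN20 : 0 ≤ N2 := by positivity
  have hAB : ∀ x : H, ‖x‖ = 1 → ‖(inner ℂ ((A * B) x) x : ℂ)‖ ≤ N1 / 4 := by
    intro x hx
    have := my_w A B x
    rw [hx] at this
    simp only [one_pow, mul_one] at this
    linarith
  have hCD : ∀ x : H, ‖x‖ = 1 → ‖(inner ℂ ((C * D) x) x : ℂ)‖ ≤ N2 / 4 := by
    intro x hx
    have := my_w C D x
    rw [hx] at this
    simp only [one_pow, mul_one] at this
    linarith
  constructor
  · refine my_numRad_le _ _ (by positivity) fun x hx => ?_
    have h1 : (inner ℂ ((A * B + C * D) x) x : ℂ)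
        = inner ℂ ((A * B) x) x + inner ℂ ((C * D) x) x := by
      rw [ContinuousLinearMap.add_apply, inner_add_left]
    calc ‖(inner ℂ ((A * B + C * D) x) x : ℂ)‖
        ≤ ‖(inner ℂ ((A * B) x) x : ℂ)‖ + ‖(inner ℂ ((C * D) x) x : ℂ)‖ := by
          rw [h1]; exact norm_add_le _ _
      _ ≤ N1 / 4 + N2 / 4 := add_le_add (hAB x hx) (hCD x hx)
      _ = (1 / 4) * (N1 + N2) := by ring
  · refine my_numRad_le _ _ (by positivity) fun x hx => ?_
    have h1 : (inner ℂ ((A * B - C * D) x) x : ℂ)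
        = inner ℂ ((A * B) x) x - inner ℂ ((C * D) x) x := by
      rw [ContinuousLinearMap.sub_apply, inner_sub_left]
    calc ‖(inner ℂ ((A * B - C * D) x) x : ℂ)‖
        ≤ ‖(inner ℂ ((A * B) x) x : ℂ)‖ + ‖(inner ℂ ((C * D) x) x : ℂ)‖ := by
          rw [h1]; exact norm_sub_le _ _
      _ ≤ N1 / 4 + N2 / 4 := add_le_add (hAB x hx) (hCD x hx)
      _ = (1 / 4) * (N1 + N2) := by ring
end

section
/- If A is a bounded linear operator and U a unitary operator on a complex Hilbert space H, then w(AU ± U*A) ≤ min{‖|A|² + I‖, ‖|A*|² + I‖}, and also w(AU ± U*A) ≤ (1/2)‖|A| + I‖ · ‖|A*| + I‖. -/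
open ContinuousLinearMap

set_option synthInstance.maxHeartbeats 1000000
set_option maxHeartbeats 1000000
set_option linter.unusedSectionVars false

section Aux
variable {H : Type*} [NormedAddCommGroup H] [InnerProductSpace ℂ H] [CompleteSpace H]

lemma numRad_le_norm (T : H →L[ℂ] H) : numRad T ≤ ‖T‖ := by
  apply Real.sSup_le _ (norm_nonneg T)
  rintro r ⟨x, hx, rfl⟩
  calc ‖(inner ℂ (T x) x : ℂ)‖ ≤ ‖T x‖ * ‖x‖ := norm_inner_le_norm _ _
    _ ≤ ‖T‖ * ‖x‖ * ‖x‖ := by gcongr; exact T.le_opNorm x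
    _ = ‖T‖ := by rw [hx]; ring

lemma sq_absOp (A : H →L[ℂ] H) : absOp A ^ 2 = adjoint A * A := by
  rw [absOp, CFC.sq_sqrt (adjoint A * A) (by rw [← star_eq_adjoint]; exact star_mul_self_nonneg A)]

lemma norm_absOp (A : H →L[ℂ] H) : ‖absOp A‖ = ‖A‖ := by
  have h0 : (0 : H →L[ℂ] H) ≤ absOp A := CFC.sqrt_nonneg _
  have hsa : star (absOp A) = absOp A := IsSelfAdjoint.of_nonneg h0
  have h1 : ‖absOp A‖ * ‖absOp A‖ = ‖A‖ * ‖A‖ := by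
    rw [← CStarRing.norm_star_mul_self (x := absOp A), hsa, ← sq, sq_absOp,
      ← star_eq_adjoint, CStarRing.norm_star_mul_self]
  nlinarith [norm_nonneg (absOp A), norm_nonneg A]

lemma norm_add_one_ge [Nontrivial H] {P : H →L[ℂ] H} (hP : (0:H →L[ℂ] H) ≤ P) :
    ‖P‖ + 1 ≤ ‖P + 1‖ := by
  have h1 : ‖P‖ ∈ spectrum ℝ P := CStarAlgebra.norm_mem_spectrum_of_nonneg hP
  have h2 : 1 + ‖P‖ ∈ spectrum ℝ (algebraMap ℝ (H →L[ℂ] H) 1 + P) := by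
    rw [← spectrum.singleton_add_eq]
    exact Set.add_mem_add (Set.mem_singleton 1) h1
  have h3 : ‖(1 + ‖P‖ : ℝ)‖ ≤ ‖algebraMap ℝ (H →L[ℂ] H) 1 + P‖ :=
    spectrum.norm_le_norm_of_mem h2
  rw [map_one, add_comm (1 : H →L[ℂ] H) P] at h3
  calc ‖P‖ + 1 = 1 + ‖P‖ := by ring
    _ ≤ ‖(1 + ‖P‖ : ℝ)‖ := le_abs_self _
    _ ≤ ‖P + 1‖ := h3

end Aux


theorem stmt18 {H : Type*} [NormedAddCommGroup H] [InnerProductSpace ℂ H] [CompleteSpace H]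
    (A U : H →L[ℂ] H) (hU : U ∈ unitary (H →L[ℂ] H)) :
    numRad (A * U + adjoint U * A) ≤
      min ‖absOp A ^ 2 + 1‖ ‖absOp (adjoint A) ^ 2 + 1‖ ∧
    numRad (A * U - adjoint U * A) ≤
      min ‖absOp A ^ 2 + 1‖ ‖absOp (adjoint A) ^ 2 + 1‖ ∧
    numRad (A * U + adjoint U * A) ≤
      (1 / 2) * (‖absOp A + 1‖ * ‖absOp (adjoint A) + 1‖) ∧
    numRad (A * U - adjoint U * A) ≤
      (1 / 2) * (‖absOp A + 1‖ * ‖absOp (adjoint A) + 1‖) := by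
  have hone : ‖(1 : H →L[ℂ] H)‖ ≤ 1 := by
    rw [ContinuousLinearMap.one_def]; exact ContinuousLinearMap.norm_id_le
  have hUU : star U * U = 1 := hU.1
  have hUU' : U * star U = 1 := hU.2
  have hU1 : ‖U‖ ≤ 1 := by
    have := CStarRing.norm_star_mul_self (x := U)
    rw [hUU] at this
    nlinarith [norm_nonneg U]
  have hU2 : ‖adjoint U‖ ≤ 1 := by rw [← star_eq_adjoint, norm_star]; exact hU1
  -- numerical radius bounds
  have keyp : numRad (A * U + adjoint U * A) ≤ 2 * ‖A‖ := by
    refine (numRad_le_norm _).trans ?_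
    calc ‖A * U + adjoint U * A‖ ≤ ‖A * U‖ + ‖adjoint U * A‖ := norm_add_le _ _
      _ ≤ ‖A‖ * ‖U‖ + ‖adjoint U‖ * ‖A‖ := by gcongr <;> exact norm_mul_le _ _
      _ ≤ ‖A‖ * 1 + 1 * ‖A‖ := by gcongr
      _ = 2 * ‖A‖ := by ring
  have keym : numRad (A * U - adjoint U * A) ≤ 2 * ‖A‖ := by
    refine (numRad_le_norm _).trans ?_
    calc ‖A * U - adjoint U * A‖ ≤ ‖A * U‖ + ‖adjoint U * A‖ := norm_sub_le _ _
      _ ≤ ‖A‖ * ‖U‖ + ‖adjoint U‖ * ‖A‖ := by gcongr <;> exact norm_mul_le _ _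
      _ ≤ ‖A‖ * 1 + 1 * ‖A‖ := by gcongr
      _ = 2 * ‖A‖ := by ring
  have b1 : 2 * ‖A‖ ≤ ‖absOp A ^ 2 + 1‖ := by
    rw [sq_absOp]
    rcases subsingleton_or_nontrivial H with h | h
    · have : A = 0 := Subsingleton.elim _ _
      simp [this]
    · have hpos : (0 : H →L[ℂ] H) ≤ adjoint A * A := by
        rw [← star_eq_adjoint]; exact star_mul_self_nonneg A
      have h1 := norm_add_one_ge hpos
      have h2 : ‖adjoint A * A‖ = ‖A‖ * ‖A‖ := by
        rw [← star_eq_adjoint]; exact CStarRing.norm_star_mul_self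
      nlinarith [norm_nonneg A, sq_nonneg (‖A‖ - 1)]
  have b2 : 2 * ‖A‖ ≤ ‖absOp (adjoint A) ^ 2 + 1‖ := by
    rw [sq_absOp, adjoint_adjoint]
    rcases subsingleton_or_nontrivial H with h | h
    · have : A = 0 := Subsingleton.elim _ _
      simp [this]
    · have hpos : (0 : H →L[ℂ] H) ≤ A * adjoint A := by
        rw [← star_eq_adjoint]; exact mul_star_self_nonneg A
      have h1 := norm_add_one_ge hpos
      have h2 : ‖A * adjoint A‖ = ‖A‖ * ‖A‖ := by
        rw [← star_eq_adjoint]; exact CStarRing.norm_self_mul_star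
      nlinarith [norm_nonneg A, sq_nonneg (‖A‖ - 1)]
  have b3 : 4 * ‖A‖ ≤ ‖absOp A + 1‖ * ‖absOp (adjoint A) + 1‖ := by
    rcases subsingleton_or_nontrivial H with h | h
    · have : A = 0 := Subsingleton.elim _ _
      simp [this]
    · have h1 := norm_add_one_ge (CFC.sqrt_nonneg (a := adjoint A * A))
      have h2 := norm_add_one_ge (CFC.sqrt_nonneg (a := adjoint (adjoint A) * adjoint A))
      rw [show CFC.sqrt (adjoint A * A) = absOp A from rfl] at h1
      rw [show CFC.sqrt (adjoint (adjoint A) * adjoint A) = absOp (adjoint A) from rfl] at h2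
      rw [norm_absOp] at h1
      rw [norm_absOp, ← star_eq_adjoint (A := A), norm_star] at h2
      rw [star_eq_adjoint] at h2
      have hm : (‖A‖ + 1) * (‖A‖ + 1) ≤ ‖absOp A + 1‖ * ‖absOp (adjoint A) + 1‖ :=
        mul_le_mul h1 h2 (by positivity) (norm_nonneg _)
      nlinarith [sq_nonneg (‖A‖ - 1)]
  refine ⟨le_trans keyp (le_min (by linarith) (by linarith)),
    le_trans keym (le_min (by linarith) (by linarith)),
    le_trans keyp (by linarith), le_trans keym (by linarith)⟩
end
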